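/- arXiv:2310.02611 — 3 statements merged into one kernel-verified Lean document; each statement's English description precedes it below -/
import Mathlib

section
/- Let g₁ and g₂ be real-valued functions on ℝ that are non-decreasing, bounded below, differentiable, and strictly convex, and assume the support of ν is all of Y. Then there exists a function v* ∈ C(Y) minimizing the semi-dual functional L over C(Y); v* is Lipschitz continuous; and it is the unique continuous minimizer. -/
open MeasureTheory Filter
open scoped BoundedContinuousFunction
open scoped ENNReal NNReal Topology

noncomputable section

/-- The quadratic transport cost `c(x,y) = τ‖x-y‖₂²`. -/
def cost {d : ℕ} (τ : ℝ) (x y : EuclideanSpace ℝ (Fin d)) : ℝ := τ * ‖x - y‖ ^ 2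

/-- The `c`-transform `v^c(x) = inf_{y ∈ Y} (c(x,y) - v(y))`. -/
def ctransform {d : ℕ} (τ : ℝ) (Y : Set (EuclideanSpace ℝ (Fin d)))
    (v : EuclideanSpace ℝ (Fin d) → ℝ) (x : EuclideanSpace ℝ (Fin d)) : ℝ :=
  sInf ((fun y => cost τ x y - v y) '' Y)

namespace SDaux

variable {d : ℕ}

lemma cost_nonneg {τ : ℝ} (hτ : 0 ≤ τ) (x y : EuclideanSpace ℝ (Fin d)) : 0 ≤ cost τ x y := by
  unfold cost; positivity

lemma cost_comm (τ : ℝ) (x y : EuclideanSpace ℝ (Fin d)) : cost τ x y = cost τ y x := by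
  unfold cost; rw [norm_sub_rev]

lemma cost_le {τ R : ℝ} (hτ : 0 ≤ τ) {x y : EuclideanSpace ℝ (Fin d)}
    (hx : ‖x‖ ≤ R) (hy : ‖y‖ ≤ R) : cost τ x y ≤ τ * (2 * R) ^ 2 := by
  unfold cost
  have h1 : ‖x - y‖ ≤ 2 * R := (norm_sub_le x y).trans (by linarith)
  have h0 : (0:ℝ) ≤ ‖x - y‖ := norm_nonneg _
  have h2 : ‖x - y‖ * ‖x - y‖ ≤ (2*R) * (2*R) := mul_le_mul h1 h1 h0 (by linarith)
  nlinarith [mul_le_mul_of_nonneg_left h2 hτ]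

lemma cost_sub_le {τ R : ℝ} (hτ : 0 ≤ τ) {x x' y : EuclideanSpace ℝ (Fin d)}
    (hx : ‖x‖ ≤ R) (hx' : ‖x'‖ ≤ R) (hy : ‖y‖ ≤ R) :
    cost τ x y - cost τ x' y ≤ 4 * τ * R * ‖x - x'‖ := by
  unfold cost
  have h1 : ‖x - y‖ ≤ 2 * R := (norm_sub_le x y).trans (by linarith)
  have h2 : ‖x' - y‖ ≤ 2 * R := (norm_sub_le x' y).trans (by linarith)
  have h3 : ‖x - y‖ - ‖x' - y‖ ≤ ‖x - x'‖ := by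
    have h := norm_sub_norm_le (x - y) (x' - y)
    have e : (x - y) - (x' - y) = x - x' := by abel
    rw [e] at h; exact h
  have h4 : (0:ℝ) ≤ ‖x - y‖ := norm_nonneg _
  have h5 : (0:ℝ) ≤ ‖x' - y‖ := norm_nonneg _
  have h6 : (0:ℝ) ≤ ‖x - x'‖ := norm_nonneg _
  have hA : τ * (‖x - y‖ + ‖x' - y‖) * (‖x - y‖ - ‖x' - y‖) ≤ τ * (‖x - y‖ + ‖x' - y‖) * ‖x - x'‖ :=
    mul_le_mul_of_nonneg_left h3 (mul_nonneg hτ (by linarith))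
  have hB : τ * (‖x - y‖ + ‖x' - y‖) * ‖x - x'‖ ≤ τ * (4 * R) * ‖x - x'‖ :=
    mul_le_mul_of_nonneg_right (mul_le_mul_of_nonneg_left (by linarith) hτ) h6
  nlinarith [hA, hB]

lemma bddBelow_ctransform_set {τ M : ℝ} (hτ : 0 ≤ τ) {B : Set (EuclideanSpace ℝ (Fin d))}
    {φ : EuclideanSpace ℝ (Fin d) → ℝ} (hφ : ∀ y ∈ B, φ y ≤ M) (x : EuclideanSpace ℝ (Fin d)) :
    BddBelow ((fun y => cost τ x y - φ y) '' B) := by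
  refine ⟨-M, ?_⟩
  rintro r ⟨y, hy, rfl⟩
  have h1 := cost_nonneg hτ x y
  have h2 := hφ y hy
  dsimp; linarith

lemma ctransform_le {τ M : ℝ} (hτ : 0 ≤ τ) {B : Set (EuclideanSpace ℝ (Fin d))}
    {φ : EuclideanSpace ℝ (Fin d) → ℝ} (hφ : ∀ y ∈ B, φ y ≤ M) {y : EuclideanSpace ℝ (Fin d)}
    (hy : y ∈ B) (x : EuclideanSpace ℝ (Fin d)) :
    ctransform τ B φ x ≤ cost τ x y - φ y :=
  csInf_le (bddBelow_ctransform_set hτ hφ x) ⟨y, hy, rfl⟩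

lemma le_ctransform {τ : ℝ} {B : Set (EuclideanSpace ℝ (Fin d))} (hB : B.Nonempty)
    {φ : EuclideanSpace ℝ (Fin d) → ℝ} {c : ℝ} {x : EuclideanSpace ℝ (Fin d)}
    (h : ∀ y ∈ B, c ≤ cost τ x y - φ y) : c ≤ ctransform τ B φ x :=
  le_csInf (hB.image _) (by rintro r ⟨y, hy, rfl⟩; exact h y hy)

lemma ctransform_congr {τ : ℝ} {B : Set (EuclideanSpace ℝ (Fin d))}
    {φ ψ : EuclideanSpace ℝ (Fin d) → ℝ} (h : Set.EqOn φ ψ B) :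
    ctransform τ B φ = ctransform τ B ψ := by
  funext x
  unfold ctransform
  congr 1
  exact Set.image_congr (fun y hy => by rw [h hy])

lemma ctransform_anti {τ M : ℝ} (hτ : 0 ≤ τ) {B : Set (EuclideanSpace ℝ (Fin d))}
    (hB : B.Nonempty) {φ ψ : EuclideanSpace ℝ (Fin d) → ℝ} (hψ : ∀ y ∈ B, ψ y ≤ M)
    (h : ∀ y ∈ B, φ y ≤ ψ y) (x : EuclideanSpace ℝ (Fin d)) :
    ctransform τ B ψ x ≤ ctransform τ B φ x := by
  apply le_ctransform hB
  intro y hy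
  have := ctransform_le hτ hψ hy x
  have := h y hy
  linarith

lemma ctransform_lipschitzOnWith {τ R : ℝ} (hτ : 0 ≤ τ) (hR : 0 ≤ R)
    {A B : Set (EuclideanSpace ℝ (Fin d))}
    (hA : ∀ x ∈ A, ‖x‖ ≤ R) (hB : ∀ y ∈ B, ‖y‖ ≤ R) (hBne : B.Nonempty)
    {φ : EuclideanSpace ℝ (Fin d) → ℝ} {M : ℝ} (hφ : ∀ y ∈ B, φ y ≤ M) :
    LipschitzOnWith (Real.toNNReal (4 * τ * R)) (ctransform τ B φ) A := by
  rw [lipschitzOnWith_iff_dist_le_mul]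
  have key : ∀ x₁ ∈ A, ∀ x₂ ∈ A,
      ctransform τ B φ x₁ ≤ ctransform τ B φ x₂ + 4 * τ * R * dist x₁ x₂ := by
    intro x₁ h₁ x₂ h₂
    have hle : ctransform τ B φ x₁ - 4 * τ * R * dist x₁ x₂ ≤ ctransform τ B φ x₂ := by
      apply le_ctransform hBne
      intro y hy
      have h5 := ctransform_le hτ hφ hy x₁
      have h6 := cost_sub_le hτ (hA _ h₁) (hA _ h₂) (hB _ hy)
      have h7 : dist x₁ x₂ = ‖x₁ - x₂‖ := dist_eq_norm _ _
      rw [h7]; linarith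
    linarith
  intro x hx x' hx'
  have h1 := key x hx x' hx'
  have h2 := key x' hx' x hx
  have hd : dist x' x = dist x x' := dist_comm _ _
  rw [hd] at h2
  rw [Real.dist_eq, Real.coe_toNNReal _ (by positivity), abs_le]
  constructor <;> linarith

lemma ctransform_close {τ : ℝ} (hτ : 0 ≤ τ) {B : Set (EuclideanSpace ℝ (Fin d))}
    (hB : B.Nonempty) {φ ψ : EuclideanSpace ℝ (Fin d) → ℝ} {Mφ Mψ ε : ℝ}
    (hφ : ∀ y ∈ B, φ y ≤ Mφ) (hψ : ∀ y ∈ B, ψ y ≤ Mψ)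
    (h : ∀ y ∈ B, |φ y - ψ y| ≤ ε) (x : EuclideanSpace ℝ (Fin d)) :
    |ctransform τ B φ x - ctransform τ B ψ x| ≤ ε := by
  rw [abs_le]
  constructor
  · have : ctransform τ B ψ x - ε ≤ ctransform τ B φ x := by
      apply le_ctransform hB
      intro y hy
      have h1 := ctransform_le hτ hψ hy x
      have h2 := abs_le.mp (h y hy)
      linarith [h2.1]
    linarith
  · have : ctransform τ B φ x - ε ≤ ctransform τ B ψ x := by
      apply le_ctransform hB
      intro y hy
      have h1 := ctransform_le hτ hφ hy x
      have h2 := abs_le.mp (h y hy)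
      linarith [h2.2]
    linarith

lemma tendsto_atTop_of_monotone_strictConvexOn {g : ℝ → ℝ} (hmono : Monotone g)
    (hconv : StrictConvexOn ℝ Set.univ g) : Tendsto g atTop atTop := by
  have h01 : g 0 < g 1 := by
    have h := hconv.2 (Set.mem_univ (0:ℝ)) (Set.mem_univ (1:ℝ)) (by norm_num)
      one_half_pos one_half_pos (by norm_num)
    simp only [smul_eq_mul, mul_zero, mul_one, zero_add] at h
    have h2 := hmono (by norm_num : (0:ℝ) ≤ 1/2)
    norm_num at h
    linarith
  apply tendsto_atTop_atTop_of_monotone hmono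
  intro b
  set s : ℝ := g 1 - g 0 with hs
  have hspos : 0 < s := by simp [hs]; linarith
  set t : ℝ := max 2 ((b - g 0) / s) with ht
  have ht2 : (2:ℝ) ≤ t := le_max_left _ _
  have ht0 : (0:ℝ) < t := by linarith
  have htb : (b - g 0) / s ≤ t := le_max_right _ _
  refine ⟨t, ?_⟩
  have hconv' := hconv.convexOn.2 (Set.mem_univ (0:ℝ)) (Set.mem_univ t)
    (by rw [sub_nonneg]; rw [div_le_one ht0]; linarith : (0:ℝ) ≤ 1 - 1/t)
    (by positivity : (0:ℝ) ≤ 1/t) (by ring)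
  simp only [smul_eq_mul, mul_zero, zero_add] at hconv'
  rw [one_div, inv_mul_cancel₀ (ne_of_gt ht0)] at hconv'
  have hbt : b - g 0 ≤ t * s := by
    have := (div_le_iff₀ hspos).mp htb
    linarith
  have hmul := mul_le_mul_of_nonneg_left hconv' (le_of_lt ht0)
  have hexp : t * ((1 - t⁻¹) * g 0 + t⁻¹ * g t) = t * g 0 - (t * t⁻¹) * g 0 + (t * t⁻¹) * g t := by
    ring
  rw [hexp, mul_inv_cancel₀ (ne_of_gt ht0)] at hmul
  have hts : t * s = t * g 1 - t * g 0 := by rw [hs]; ring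
  linarith [hmul]

end SDaux

/-- The semi-dual functional
`L(v) = ∫_X g₁(-v^c(x)) dμ(x) + ∫_Y g₂(-v(y)) dν(y)`. -/
def semidual {d : ℕ} (τ : ℝ) (X Y : Set (EuclideanSpace ℝ (Fin d)))
    (μ ν : Measure (EuclideanSpace ℝ (Fin d))) (g₁ g₂ : ℝ → ℝ)
    (v : EuclideanSpace ℝ (Fin d) → ℝ) : ℝ :=
  (∫ x in X, g₁ (-(ctransform τ Y v x)) ∂μ) + ∫ y in Y, g₂ (-(v y)) ∂ν

/-- If `g₁, g₂` are non-decreasing, bounded below, differentiable and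
strictly convex, and `ν` has full support in `Y`, then the semi-dual functional `L`
admits a minimizer `v⋆` over `C(Y)`; `v⋆` is Lipschitz continuous; and it is the
unique continuous minimizer (up to equality on `Y`). -/
theorem semidual_exists_unique_lipschitz_minimizer
    {d : ℕ} (τ : ℝ) (hτ : 0 < τ)
    (X Y : Set (EuclideanSpace ℝ (Fin d))) (hX : IsCompact X) (hY : IsCompact Y)
    (μ ν : Measure (EuclideanSpace ℝ (Fin d)))
    [IsProbabilityMeasure μ] [IsProbabilityMeasure ν]
    (hμX : μ Xᶜ = 0) (hνY : ν Yᶜ = 0)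
    (hνfull : ∀ U : Set (EuclideanSpace ℝ (Fin d)),
      IsOpen U → (U ∩ Y).Nonempty → 0 < ν (U ∩ Y))
    (g₁ g₂ : ℝ → ℝ)
    (hg₁mono : Monotone g₁) (hg₂mono : Monotone g₂)
    (hg₁bdd : BddBelow (Set.range g₁)) (hg₂bdd : BddBelow (Set.range g₂))
    (hg₁diff : Differentiable ℝ g₁) (hg₂diff : Differentiable ℝ g₂)
    (hg₁conv : StrictConvexOn ℝ Set.univ g₁) (hg₂conv : StrictConvexOn ℝ Set.univ g₂) :
    ∃ v : EuclideanSpace ℝ (Fin d) → ℝ,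
      ContinuousOn v Y ∧
      (∃ K : ℝ≥0, LipschitzOnWith K v Y) ∧
      (∀ w : EuclideanSpace ℝ (Fin d) → ℝ, ContinuousOn w Y →
        semidual τ X Y μ ν g₁ g₂ v ≤ semidual τ X Y μ ν g₁ g₂ w) ∧
      (∀ w : EuclideanSpace ℝ (Fin d) → ℝ, ContinuousOn w Y →
        (∀ u : EuclideanSpace ℝ (Fin d) → ℝ, ContinuousOn u Y →
          semidual τ X Y μ ν g₁ g₂ w ≤ semidual τ X Y μ ν g₁ g₂ u) →
        Set.EqOn w v Y) := by
  classical
  have hτ0 : (0:ℝ) ≤ τ := le_of_lt hτ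
  have hXm : MeasurableSet X := hX.measurableSet
  have hYm : MeasurableSet Y := hY.measurableSet
  have hμX1 : μ X = 1 := by
    have h := measure_add_measure_compl (μ := μ) hXm
    rw [hμX, add_zero, measure_univ] at h; exact h
  have hνY1 : ν Y = 1 := by
    have h := measure_add_measure_compl (μ := ν) hYm
    rw [hνY, add_zero, measure_univ] at h; exact h
  have hXne : X.Nonempty := by
    rw [Set.nonempty_iff_ne_empty]; intro h; rw [h] at hμX1; simp at hμX1
  have hYne : Y.Nonempty := by
    rw [Set.nonempty_iff_ne_empty]; intro h; rw [h] at hνY1; simp at hνY1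
  obtain ⟨x₀, hx₀⟩ := hXne
  obtain ⟨y₀, hy₀⟩ := hYne
  obtain ⟨R₁, hR₁⟩ := (hX.union hY).isBounded.exists_norm_le
  set R : ℝ := max R₁ 0 with hRdef
  have hR0 : (0:ℝ) ≤ R := le_max_right _ _
  have hRX : ∀ x ∈ X, ‖x‖ ≤ R := fun x hx =>
    le_trans (hR₁ x (Set.mem_union_left _ hx)) (le_max_left _ _)
  have hRY : ∀ y ∈ Y, ‖y‖ ≤ R := fun y hy =>
    le_trans (hR₁ y (Set.mem_union_right _ hy)) (le_max_left _ _)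
  set k : ℝ := 4 * τ * R with hkdef
  have hk0 : (0:ℝ) ≤ k := by positivity
  set K : ℝ≥0 := Real.toNNReal k with hKdef
  have hKk : (K : ℝ) = k := Real.coe_toNNReal _ hk0
  set Cm : ℝ := τ * (2 * R) ^ 2 with hCmdef
  have hCm0 : (0:ℝ) ≤ Cm := by positivity
  obtain ⟨b₁, hb₁⟩ := hg₁bdd
  have hb₁' : ∀ r, b₁ ≤ g₁ r := fun r => hb₁ ⟨r, rfl⟩
  obtain ⟨b₂, hb₂⟩ := hg₂bdd
  have hb₂' : ∀ r, b₂ ≤ g₂ r := fun r => hb₂ ⟨r, rfl⟩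
  have hg₁c : Continuous g₁ := hg₁diff.continuous
  have hg₂c : Continuous g₂ := hg₂diff.continuous
  set L := semidual τ X Y μ ν g₁ g₂ with hLdef
  have eL : ∀ ψ : EuclideanSpace ℝ (Fin d) → ℝ,
      L ψ = (∫ x in X, g₁ (-(ctransform τ Y ψ x)) ∂μ) + ∫ y in Y, g₂ (-(ψ y)) ∂ν := by
    intro ψ; rw [hLdef]; rfl
  have hbound : ∀ w : EuclideanSpace ℝ (Fin d) → ℝ, ContinuousOn w Y →
      ∃ Mw : ℝ, ∀ y ∈ Y, |w y| ≤ Mw := by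
    intro w hw
    obtain ⟨Mw, hMw⟩ := hY.exists_bound_of_continuousOn hw
    exact ⟨Mw, fun y hy => by have := hMw y hy; rwa [Real.norm_eq_abs] at this⟩
  have hLcongr : ∀ v w : EuclideanSpace ℝ (Fin d) → ℝ, Set.EqOn v w Y → L v = L w := by
    intro v w h
    rw [eL, eL, SDaux.ctransform_congr h]
    congr 1
    exact setIntegral_congr_fun hYm (fun y hy => by rw [h hy])
  have hTle : ∀ (w : EuclideanSpace ℝ (Fin d) → ℝ) (Mw : ℝ), (∀ y ∈ Y, |w y| ≤ Mw) →
      (∀ x, - Mw ≤ ctransform τ Y w x) ∧ (∀ x ∈ X, ctransform τ Y w x ≤ Cm + Mw) := by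
    intro w Mw hMw
    constructor
    · intro x
      apply SDaux.le_ctransform ⟨y₀, hy₀⟩
      intro y hy
      have h1 := SDaux.cost_nonneg hτ0 x y
      have h2 := (abs_le.mp (hMw y hy)).2
      linarith
    · intro x hx
      have h1 := SDaux.ctransform_le (M := Mw) hτ0 (fun y hy => (abs_le.mp (hMw y hy)).2) hy₀ x
      have h2 := SDaux.cost_le hτ0 (hRX x hx) (hRY y₀ hy₀)
      have h3 := (abs_le.mp (hMw y₀ hy₀)).1
      rw [← hCmdef] at h2
      linarith
  have integ₁ : ∀ (w : EuclideanSpace ℝ (Fin d) → ℝ) (Mw : ℝ), (∀ y ∈ Y, |w y| ≤ Mw) →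
      IntegrableOn (fun x => g₁ (-(ctransform τ Y w x))) X μ := by
    intro w Mw hMw
    have hlip : LipschitzOnWith K (ctransform τ Y w) X := by
      rw [hKdef, hkdef]
      exact SDaux.ctransform_lipschitzOnWith hτ0 hR0 hRX hRY ⟨y₀, hy₀⟩
        (fun y hy => (abs_le.mp (hMw y hy)).2)
    exact (hg₁c.comp_continuousOn hlip.continuousOn.neg).integrableOn_compact hX
  have integ₂ : ∀ w : EuclideanSpace ℝ (Fin d) → ℝ, ContinuousOn w Y →
      IntegrableOn (fun y => g₂ (-(w y))) Y ν := by
    intro w hw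
    exact (hg₂c.comp_continuousOn hw.neg).integrableOn_compact hY
  have const₁ : ∀ c : ℝ, ∫ _x in X, c ∂μ = c := by
    intro c; rw [setIntegral_const, measureReal_def, hμX1]; simp
  have const₂ : ∀ c : ℝ, ∫ _y in Y, c ∂ν = c := by
    intro c; rw [setIntegral_const, measureReal_def, hνY1]; simp
  have cint₁ : ∀ c : ℝ, IntegrableOn (fun _ : EuclideanSpace ℝ (Fin d) => c) X μ :=
    fun c => integrableOn_const (by rw [hμX1]; exact ENNReal.one_ne_top)
  have cint₂ : ∀ c : ℝ, IntegrableOn (fun _ : EuclideanSpace ℝ (Fin d) => c) Y ν :=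
    fun c => integrableOn_const (by rw [hνY1]; exact ENNReal.one_ne_top)
  -- Double transform decreases `L`, is `K`-Lipschitz on `Y` and dominates `w` on `Y`.
  have keyD : ∀ w : EuclideanSpace ℝ (Fin d) → ℝ, ContinuousOn w Y →
      LipschitzOnWith K (ctransform τ X (ctransform τ Y w)) Y ∧
      (∀ y ∈ Y, w y ≤ ctransform τ X (ctransform τ Y w) y) ∧
      L (ctransform τ X (ctransform τ Y w)) ≤ L w := by
    intro w hw
    obtain ⟨Mw, hMw⟩ := hbound w hw
    obtain ⟨hTlo, hThi⟩ := hTle w Mw hMw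
    have hwle : ∀ y ∈ Y, w y ≤ Mw := fun y hy => (abs_le.mp (hMw y hy)).2
    have hulip : LipschitzOnWith K (ctransform τ X (ctransform τ Y w)) Y := by
      rw [hKdef, hkdef]
      exact SDaux.ctransform_lipschitzOnWith hτ0 hR0 hRY hRX ⟨x₀, hx₀⟩ hThi
    have hug : ∀ y ∈ Y, w y ≤ ctransform τ X (ctransform τ Y w) y := by
      intro y hy
      apply SDaux.le_ctransform ⟨x₀, hx₀⟩
      intro x hx
      have h1 := SDaux.ctransform_le (M := Mw) hτ0 hwle hy x
      rw [SDaux.cost_comm τ y x]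
      linarith
    have huY : ∀ y ∈ Y, ctransform τ X (ctransform τ Y w) y ≤ Cm + Mw := by
      intro y hy
      have h1 := SDaux.ctransform_le (M := Cm + Mw) hτ0 hThi hx₀ y
      have h2 := SDaux.cost_le hτ0 (hRY y hy) (hRX x₀ hx₀)
      rw [← hCmdef] at h2
      have h3 := hTlo x₀
      linarith
    have hTu : ∀ x ∈ X, ctransform τ Y (ctransform τ X (ctransform τ Y w)) x
        = ctransform τ Y w x := by
      intro x hx
      apply le_antisymm
      · exact SDaux.ctransform_anti hτ0 ⟨y₀, hy₀⟩ huY hug x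
      · apply SDaux.le_ctransform ⟨y₀, hy₀⟩
        intro y hy
        have h1 := SDaux.ctransform_le (M := Cm + Mw) hτ0 hThi hx y
        rw [SDaux.cost_comm τ x y]
        linarith
    refine ⟨hulip, hug, ?_⟩
    rw [eL, eL]
    have e₁ : ∫ x in X, g₁ (-(ctransform τ Y (ctransform τ X (ctransform τ Y w)) x)) ∂μ
        = ∫ x in X, g₁ (-(ctransform τ Y w x)) ∂μ :=
      setIntegral_congr_fun hXm (fun x hx => by rw [hTu x hx])
    have hucont : ContinuousOn (ctransform τ X (ctransform τ Y w)) Y := hulip.continuousOn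
    have e₂ : ∫ y in Y, g₂ (-(ctransform τ X (ctransform τ Y w) y)) ∂ν
        ≤ ∫ y in Y, g₂ (-(w y)) ∂ν :=
      setIntegral_mono_on (integ₂ _ hucont) (integ₂ w hw) hYm
        (fun y hy => hg₂mono (by linarith [hug y hy]))
    exact add_le_add (le_of_eq e₁) e₂
  -- the reference point u₀
  have hφ₀lo : ∀ x, (0:ℝ) ≤ ctransform τ Y (fun _ => (0:ℝ)) x := fun x =>
    SDaux.le_ctransform ⟨y₀, hy₀⟩ (fun y hy => by simpa using SDaux.cost_nonneg hτ0 x y)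
  have hφ₀hi : ∀ x ∈ X, ctransform τ Y (fun _ => (0:ℝ)) x ≤ Cm := by
    intro x hx
    have h1 := SDaux.ctransform_le (M := (0:ℝ)) hτ0
      (φ := fun _ => (0:ℝ)) (fun y _ => le_refl 0) hy₀ x
    have h2 := SDaux.cost_le hτ0 (hRX x hx) (hRY y₀ hy₀)
    rw [← hCmdef] at h2
    simp only [sub_zero] at h1
    linarith
  have hu₀bd : ∀ y ∈ Y, |ctransform τ X (ctransform τ Y (fun _ => (0:ℝ))) y| ≤ Cm := by
    intro y hy
    rw [abs_le]
    constructor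
    · apply SDaux.le_ctransform ⟨x₀, hx₀⟩
      intro x hx
      have h1 := SDaux.cost_nonneg hτ0 y x
      have h2 := hφ₀hi x hx
      linarith
    · have h1 := SDaux.ctransform_le (M := Cm) hτ0 hφ₀hi hx₀ y
      have h2 := SDaux.cost_le hτ0 (hRY y hy) (hRX x₀ hx₀)
      rw [← hCmdef] at h2
      have h3 := hφ₀lo x₀
      linarith
  obtain ⟨hu₀lip, hu₀ge, hu₀le⟩ := keyD (fun _ => (0:ℝ)) continuousOn_const
  set u₀ := ctransform τ X (ctransform τ Y (fun _ => (0:ℝ))) with hu₀def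
  set L₀ := L u₀ with hL₀def
  -- choice of M'
  obtain ⟨t₁, ht₁⟩ : ∃ t₁, ∀ s, t₁ ≤ s → L₀ - b₂ ≤ g₁ s := by
    have h := (SDaux.tendsto_atTop_of_monotone_strictConvexOn hg₁mono
      hg₁conv).eventually_ge_atTop (L₀ - b₂)
    rw [eventually_atTop] at h
    obtain ⟨t₁, h⟩ := h
    exact ⟨t₁, fun s hs => h s hs⟩
  obtain ⟨t₂, ht₂⟩ : ∃ t₂, ∀ s, t₂ ≤ s → L₀ - b₁ ≤ g₂ s := by
    have h := (SDaux.tendsto_atTop_of_monotone_strictConvexOn hg₂mono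
      hg₂conv).eventually_ge_atTop (L₀ - b₁)
    rw [eventually_atTop] at h
    obtain ⟨t₂, h⟩ := h
    exact ⟨t₂, fun s hs => h s hs⟩
  set M' : ℝ := max Cm (max (t₁ + Cm) (t₂ + 2 * k * R)) with hM'def
  have hM'1 : Cm ≤ M' := le_max_left _ _
  have hM'2 : t₁ + Cm ≤ M' := le_trans (le_max_left _ _) (le_max_right _ _)
  have hM'3 : t₂ + 2 * k * R ≤ M' := le_trans (le_max_right _ _) (le_max_right _ _)
  -- coercivity
  have coercive : ∀ w : EuclideanSpace ℝ (Fin d) → ℝ, ContinuousOn w Y →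
      LipschitzOnWith K w Y → ¬ (∀ y ∈ Y, |w y| ≤ M') → L₀ ≤ L w := by
    intro w hw hwlip hnb
    push_neg at hnb
    obtain ⟨y₁, hy₁, hy₁b⟩ := hnb
    obtain ⟨Mw, hMw⟩ := hbound w hw
    have hI₁ := integ₁ w Mw hMw
    have hI₂ := integ₂ w hw
    rw [eL]
    rcases lt_abs.mp hy₁b with hpos | hneg
    · -- w y₁ > M'
      have hptw : ∀ x ∈ X, g₁ (M' - Cm) ≤ g₁ (-(ctransform τ Y w x)) := by
        intro x hx
        apply hg₁mono
        have h1 := SDaux.ctransform_le (M := Mw) hτ0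
          (fun y hy => (abs_le.mp (hMw y hy)).2) hy₁ x
        have h2 := SDaux.cost_le hτ0 (hRX x hx) (hRY y₁ hy₁)
        rw [← hCmdef] at h2
        linarith
      have hI₁ge : g₁ (M' - Cm) ≤ ∫ x in X, g₁ (-(ctransform τ Y w x)) ∂μ := by
        have h := setIntegral_mono_on (cint₁ (g₁ (M' - Cm))) hI₁ hXm hptw
        rwa [const₁] at h
      have hI₂ge : b₂ ≤ ∫ y in Y, g₂ (-(w y)) ∂ν := by
        have h := setIntegral_mono_on (cint₂ b₂) hI₂ hYm (fun y _ => hb₂' _)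
        rwa [const₂] at h
      have hg1 : L₀ - b₂ ≤ g₁ (M' - Cm) := ht₁ _ (by linarith)
      linarith
    · -- w y₁ < -M'
      have hspread : ∀ y ∈ Y, w y ≤ w y₁ + 2 * k * R := by
        intro y hy
        have hd := (lipschitzOnWith_iff_dist_le_mul.mp hwlip) y hy y₁ hy₁
        rw [hKk] at hd
        have hdyy : dist y y₁ ≤ 2 * R := by
          rw [dist_eq_norm]
          calc ‖y - y₁‖ ≤ ‖y‖ + ‖y₁‖ := norm_sub_le _ _
            _ ≤ 2 * R := by linarith [hRY y hy, hRY y₁ hy₁]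
        have h2 : w y - w y₁ ≤ k * (2 * R) := by
          calc w y - w y₁ ≤ |w y - w y₁| := le_abs_self _
            _ = dist (w y) (w y₁) := (Real.dist_eq _ _).symm
            _ ≤ k * dist y y₁ := hd
            _ ≤ k * (2 * R) := mul_le_mul_of_nonneg_left hdyy hk0
        linarith
      have hptw : ∀ y ∈ Y, g₂ (M' - 2 * k * R) ≤ g₂ (-(w y)) := by
        intro y hy
        apply hg₂mono
        have := hspread y hy
        linarith
      have hI₂ge : g₂ (M' - 2 * k * R) ≤ ∫ y in Y, g₂ (-(w y)) ∂ν := by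
        have h := setIntegral_mono_on (cint₂ (g₂ (M' - 2 * k * R))) hI₂ hYm hptw
        rwa [const₂] at h
      have hI₁ge : b₁ ≤ ∫ x in X, g₁ (-(ctransform τ Y w x)) ∂μ := by
        have h := setIntegral_mono_on (cint₁ b₁) hI₁ hXm (fun x _ => hb₁' _)
        rwa [const₁] at h
      have hg2 : L₀ - b₁ ≤ g₂ (M' - 2 * k * R) := ht₂ _ (by linarith)
      linarith
  -- the compact family A inside C(Y)
  haveI hYcs : CompactSpace ↥Y := isCompact_iff_compactSpace.mp hY
  set ext : (↥Y →ᵇ ℝ) → EuclideanSpace ℝ (Fin d) → ℝ :=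
    fun u x => if h : x ∈ Y then u ⟨x, h⟩ else 0 with hextdef
  have hext_eq : ∀ (u : ↥Y →ᵇ ℝ) (y : EuclideanSpace ℝ (Fin d)) (hy : y ∈ Y),
      ext u y = u ⟨y, hy⟩ := by
    intro u y hy
    simp only [hextdef, dif_pos hy]
  have hext_restrict : ∀ u : ↥Y →ᵇ ℝ, Y.domRestrict (ext u) = ⇑u := by
    intro u; funext p; rw [Set.restrict_apply, hext_eq u p p.2]
  have hext_cont : ∀ u : ↥Y →ᵇ ℝ, ContinuousOn (ext u) Y := by
    intro u
    rw [continuousOn_iff_continuous_restrict, hext_restrict]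
    exact u.continuous
  have hext_bdd : ∀ (u : ↥Y →ᵇ ℝ), (∀ p, |u p| ≤ M') → ∀ y ∈ Y, |ext u y| ≤ M' := by
    intro u h y hy; rw [hext_eq u y hy]; exact h _
  set A : Set (↥Y →ᵇ ℝ) := {u | LipschitzWith K ⇑u ∧ ∀ p, |u p| ≤ M'} with hAdef
  have hAclosed : IsClosed A := by
    have h1 : IsClosed {u : ↥Y →ᵇ ℝ | LipschitzWith K ⇑u} := by
      have he : {u : ↥Y →ᵇ ℝ | LipschitzWith K ⇑u} =
          ⋂ (p : ↥Y) (q : ↥Y), {u : ↥Y →ᵇ ℝ | dist (u p) (u q) ≤ (K:ℝ) * dist p q} := by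
        ext u
        simp only [Set.mem_iInter, Set.mem_setOf_eq]
        exact lipschitzWith_iff_dist_le_mul
      rw [he]
      refine isClosed_iInter fun p => isClosed_iInter fun q => ?_
      exact isClosed_le
        (Continuous.dist (continuous_eval_const p)
          (continuous_eval_const q)) continuous_const
    have h2 : IsClosed {u : ↥Y →ᵇ ℝ | ∀ p, |u p| ≤ M'} := by
      have he : {u : ↥Y →ᵇ ℝ | ∀ p, |u p| ≤ M'} =
          ⋂ (p : ↥Y), {u : ↥Y →ᵇ ℝ | |u p| ≤ M'} := by
        ext u; simp only [Set.mem_iInter, Set.mem_setOf_eq]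
      rw [he]
      refine isClosed_iInter fun p => ?_
      exact isClosed_le (continuous_abs.comp (continuous_eval_const p))
        continuous_const
    rw [hAdef, Set.setOf_and]
    exact h1.inter h2
  have hAcomp : IsCompact A := by
    apply BoundedContinuousFunction.arzela_ascoli₂ (Set.Icc (-M') M') isCompact_Icc A hAclosed
    · intro f x hf
      rw [Set.mem_Icc]
      have h := abs_le.mp (hf.2 x)
      exact ⟨h.1, h.2⟩
    · apply Metric.equicontinuous_of_continuity_modulus (fun t => k * t)
      · have h := (continuous_mul_left k).tendsto (0:ℝ)
        simpa using h
      · intro p q i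
        have h := i.2.1.dist_le_mul p q
        rw [hKk] at h
        exact h
  set F : (↥Y →ᵇ ℝ) → ℝ := fun u => L (ext u) with hFdef
  have hM'0 : (0:ℝ) ≤ M' := le_trans hCm0 hM'1
  -- continuity of F on A
  have hFcont : ContinuousOn F A := by
    rw [Metric.continuousOn_iff]
    intro u hu ε hε
    have husub : ∀ u' : ↥Y →ᵇ ℝ, u' ∈ A →
        (∀ y ∈ Y, -(ext u' y) ∈ Set.Icc (-(Cm + M')) (Cm + M')) ∧
        (∀ x ∈ X, -(ctransform τ Y (ext u') x) ∈ Set.Icc (-(Cm + M')) (Cm + M')) := by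
      intro u' hu'
      have hb := hext_bdd u' hu'.2
      constructor
      · intro y hy
        have h := abs_le.mp (hb y hy)
        rw [Set.mem_Icc]
        constructor
        · linarith [h.2]
        · linarith [h.1]
      · intro x hx
        obtain ⟨hlo, hhi⟩ := hTle (ext u') M' hb
        rw [Set.mem_Icc]
        constructor
        · linarith [hhi x hx]
        · linarith [hlo x]
    have hg₁u := (isCompact_Icc :
      IsCompact (Set.Icc (-(Cm + M')) (Cm + M'))).uniformContinuousOn_of_continuous
      hg₁c.continuousOn
    rw [Metric.uniformContinuousOn_iff] at hg₁u
    obtain ⟨δ₁, hδ₁pos, hδ₁⟩ := hg₁u (ε/3) (by linarith)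
    have hg₂u := (isCompact_Icc :
      IsCompact (Set.Icc (-(Cm + M')) (Cm + M'))).uniformContinuousOn_of_continuous
      hg₂c.continuousOn
    rw [Metric.uniformContinuousOn_iff] at hg₂u
    obtain ⟨δ₂, hδ₂pos, hδ₂⟩ := hg₂u (ε/3) (by linarith)
    refine ⟨min δ₁ δ₂, lt_min hδ₁pos hδ₂pos, ?_⟩
    intro u' hu' hdist
    have hd1 : dist u' u < δ₁ := lt_of_lt_of_le hdist (min_le_left _ _)
    have hd2 : dist u' u < δ₂ := lt_of_lt_of_le hdist (min_le_right _ _)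
    have hclose : ∀ y ∈ Y, |ext u' y - ext u y| ≤ dist u' u := by
      intro y hy
      rw [hext_eq u' y hy, hext_eq u y hy, ← Real.dist_eq]
      exact BoundedContinuousFunction.dist_coe_le_dist _
    have hTclose : ∀ x, |ctransform τ Y (ext u') x - ctransform τ Y (ext u) x| ≤ dist u' u := by
      intro x
      exact SDaux.ctransform_close hτ0 ⟨y₀, hy₀⟩
        (fun y hy => (abs_le.mp (hext_bdd u' hu'.2 y hy)).2)
        (fun y hy => (abs_le.mp (hext_bdd u hu.2 y hy)).2) hclose x
    have key₁ : |(∫ x in X, g₁ (-(ctransform τ Y (ext u') x)) ∂μ)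
        - ∫ x in X, g₁ (-(ctransform τ Y (ext u) x)) ∂μ| ≤ ε/3 := by
      have hint' := integ₁ (ext u') M' (hext_bdd u' hu'.2)
      have hint := integ₁ (ext u) M' (hext_bdd u hu.2)
      rw [← integral_sub hint' hint]
      have hptb : ∀ x ∈ X, ‖g₁ (-(ctransform τ Y (ext u') x))
          - g₁ (-(ctransform τ Y (ext u) x))‖ ≤ ε/3 := by
        intro x hx
        have hJ1 := (husub u' hu').2 x hx
        have hJ2 := (husub u hu).2 x hx
        have hdd : dist (-(ctransform τ Y (ext u') x)) (-(ctransform τ Y (ext u) x)) < δ₁ := by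
          rw [Real.dist_eq]
          have h := hTclose x
          have e : -(ctransform τ Y (ext u') x) - -(ctransform τ Y (ext u) x)
              = -(ctransform τ Y (ext u') x - ctransform τ Y (ext u) x) := by ring
          rw [e, abs_neg]
          exact lt_of_le_of_lt h hd1
        have h := hδ₁ _ hJ1 _ hJ2 hdd
        rw [Real.dist_eq] at h
        rw [Real.norm_eq_abs]
        exact le_of_lt h
      have hnorm := norm_setIntegral_le_of_norm_le_const (μ := μ)
        (by rw [hμX1]; exact ENNReal.one_lt_top) hptb
      rw [Real.norm_eq_abs, measureReal_def, hμX1, ENNReal.toReal_one, mul_one] at hnorm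
      exact hnorm
    have key₂ : |(∫ y in Y, g₂ (-(ext u' y)) ∂ν) - ∫ y in Y, g₂ (-(ext u y)) ∂ν| ≤ ε/3 := by
      have hint' := integ₂ (ext u') (hext_cont u')
      have hint := integ₂ (ext u) (hext_cont u)
      rw [← integral_sub hint' hint]
      have hptb : ∀ y ∈ Y, ‖g₂ (-(ext u' y)) - g₂ (-(ext u y))‖ ≤ ε/3 := by
        intro y hy
        have hJ1 := (husub u' hu').1 y hy
        have hJ2 := (husub u hu).1 y hy
        have hdd : dist (-(ext u' y)) (-(ext u y)) < δ₂ := by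
          rw [Real.dist_eq]
          have h := hclose y hy
          have e : -(ext u' y) - -(ext u y) = -(ext u' y - ext u y) := by ring
          rw [e, abs_neg]
          exact lt_of_le_of_lt h hd2
        have h := hδ₂ _ hJ1 _ hJ2 hdd
        rw [Real.dist_eq] at h
        rw [Real.norm_eq_abs]
        exact le_of_lt h
      have hnorm := norm_setIntegral_le_of_norm_le_const (μ := ν)
        (by rw [hνY1]; exact ENNReal.one_lt_top) hptb
      rw [Real.norm_eq_abs, measureReal_def, hνY1, ENNReal.toReal_one, mul_one] at hnorm
      exact hnorm
    rw [Real.dist_eq]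
    have eF : F u' - F u = ((∫ x in X, g₁ (-(ctransform τ Y (ext u') x)) ∂μ)
        - ∫ x in X, g₁ (-(ctransform τ Y (ext u) x)) ∂μ)
        + ((∫ y in Y, g₂ (-(ext u' y)) ∂ν) - ∫ y in Y, g₂ (-(ext u y)) ∂ν) := by
      simp only [hFdef]
      rw [eL, eL]
      ring
    rw [eF]
    calc |((∫ x in X, g₁ (-(ctransform τ Y (ext u') x)) ∂μ)
        - ∫ x in X, g₁ (-(ctransform τ Y (ext u) x)) ∂μ)
        + ((∫ y in Y, g₂ (-(ext u' y)) ∂ν) - ∫ y in Y, g₂ (-(ext u y)) ∂ν)|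
        ≤ |(∫ x in X, g₁ (-(ctransform τ Y (ext u') x)) ∂μ)
        - ∫ x in X, g₁ (-(ctransform τ Y (ext u) x)) ∂μ|
        + |(∫ y in Y, g₂ (-(ext u' y)) ∂ν) - ∫ y in Y, g₂ (-(ext u y)) ∂ν| := abs_add_le _ _
      _ ≤ ε/3 + ε/3 := add_le_add key₁ key₂
      _ < ε := by linarith
  -- the reference element of A
  have hu₀cont : ContinuousOn u₀ Y := hu₀lip.continuousOn
  set u₀b : ↥Y →ᵇ ℝ := BoundedContinuousFunction.mkOfCompact
    ⟨Y.restrict u₀, continuousOn_iff_continuous_restrict.mp hu₀cont⟩ with hu₀bdef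
  have hu₀bcoe : ∀ p : ↥Y, u₀b p = u₀ p := fun p => rfl
  have hu₀bA : u₀b ∈ A := by
    constructor
    · exact hu₀lip.to_restrict
    · intro p
      rw [hu₀bcoe]
      exact le_trans (hu₀bd p p.2) hM'1
  have hextu₀ : Set.EqOn (ext u₀b) u₀ Y := fun y hy => by rw [hext_eq _ y hy]; rfl
  obtain ⟨ustar, hustarA, hmin⟩ := hAcomp.exists_isMinOn ⟨u₀b, hu₀bA⟩ hFcont
  set v := ext ustar with hvdef
  have hvcont : ContinuousOn v Y := hext_cont ustar
  have hvlip : LipschitzOnWith K v Y := by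
    rw [lipschitzOnWith_iff_restrict]
    have e : Y.domRestrict v = ⇑ustar := hext_restrict ustar
    rw [e]
    exact hustarA.1
  -- minimality of v
  have hvm : ∀ w : EuclideanSpace ℝ (Fin d) → ℝ, ContinuousOn w Y → L v ≤ L w := by
    intro w hw
    obtain ⟨hulip, hug, hLle⟩ := keyD w hw
    by_cases hb : ∀ y ∈ Y, |ctransform τ X (ctransform τ Y w) y| ≤ M'
    · have hucont : ContinuousOn (ctransform τ X (ctransform τ Y w)) Y := hulip.continuousOn
      set ub : ↥Y →ᵇ ℝ := BoundedContinuousFunction.mkOfCompact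
        ⟨Y.restrict (ctransform τ X (ctransform τ Y w)),
          continuousOn_iff_continuous_restrict.mp hucont⟩ with hubdef
      have hubA : ub ∈ A := ⟨hulip.to_restrict, fun p => hb p p.2⟩
      have hequ : Set.EqOn (ext ub) (ctransform τ X (ctransform τ Y w)) Y :=
        fun y hy => by rw [hext_eq _ y hy]; rfl
      have h1 : F ustar ≤ F ub := hmin hubA
      calc L v = F ustar := rfl
        _ ≤ F ub := h1
        _ = L (ctransform τ X (ctransform τ Y w)) := hLcongr _ _ hequ
        _ ≤ L w := hLle
    · have h0 : L₀ ≤ L (ctransform τ X (ctransform τ Y w)) :=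
        coercive _ hulip.continuousOn hulip hb
      have h1 : F ustar ≤ F u₀b := hmin hu₀bA
      calc L v = F ustar := rfl
        _ ≤ F u₀b := h1
        _ = L u₀ := hLcongr _ _ hextu₀
        _ = L₀ := rfl
        _ ≤ L (ctransform τ X (ctransform τ Y w)) := h0
        _ ≤ L w := hLle
  -- uniqueness
  have huniq : ∀ w : EuclideanSpace ℝ (Fin d) → ℝ, ContinuousOn w Y →
      (∀ u' : EuclideanSpace ℝ (Fin d) → ℝ, ContinuousOn u' Y → L w ≤ L u') →
      Set.EqOn w v Y := by
    intro w hw hwmin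
    have hLwv : L w = L v := le_antisymm (hwmin v hvcont) (hvm w hw)
    set z : EuclideanSpace ℝ (Fin d) → ℝ := fun y => (w y + v y) / 2 with hzdef
    have hzcont : ContinuousOn z Y := (hw.add hvcont).div_const 2
    obtain ⟨Mw, hMw⟩ := hbound w hw
    obtain ⟨Mv, hMv⟩ := hbound v hvcont
    have hMz : ∀ y ∈ Y, |z y| ≤ (Mw + Mv) / 2 := by
      intro y hy
      have h1 := hMw y hy
      have h2 := hMv y hy
      have h3 := abs_add_le (w y) (v y)
      have e : z y = (w y + v y) / 2 := rfl
      rw [e, abs_div, abs_two]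
      linarith [abs_nonneg (w y + v y)]
    have hmid₁ : ∀ x ∈ X, g₁ (-(ctransform τ Y z x))
        ≤ (g₁ (-(ctransform τ Y w x)) + g₁ (-(ctransform τ Y v x))) / 2 := by
      intro x hx
      have hTz : (ctransform τ Y w x + ctransform τ Y v x) / 2 ≤ ctransform τ Y z x := by
        apply SDaux.le_ctransform ⟨y₀, hy₀⟩
        intro y hy
        have h1 := SDaux.ctransform_le (M := Mw) hτ0
          (fun y' hy' => (abs_le.mp (hMw y' hy')).2) hy x
        have h2 := SDaux.ctransform_le (M := Mv) hτ0
          (fun y' hy' => (abs_le.mp (hMv y' hy')).2) hy x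
        have e : z y = (w y + v y) / 2 := rfl
        rw [e]
        linarith
      have hcv := hg₁conv.convexOn.2 (Set.mem_univ (-(ctransform τ Y w x)))
        (Set.mem_univ (-(ctransform τ Y v x))) (by norm_num : (0:ℝ) ≤ 1/2)
        (by norm_num : (0:ℝ) ≤ 1/2) (by norm_num)
      simp only [smul_eq_mul] at hcv
      have hmono := hg₁mono (show -(ctransform τ Y z x)
          ≤ (1/2) * (-(ctransform τ Y w x)) + (1/2) * (-(ctransform τ Y v x)) by linarith)
      linarith
    have hmid₂ : ∀ y ∈ Y, g₂ (-(z y)) ≤ (g₂ (-(w y)) + g₂ (-(v y))) / 2 := by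
      intro y hy
      have hcv := hg₂conv.convexOn.2 (Set.mem_univ (-(w y))) (Set.mem_univ (-(v y)))
        (by norm_num : (0:ℝ) ≤ 1/2) (by norm_num : (0:ℝ) ≤ 1/2) (by norm_num)
      simp only [smul_eq_mul] at hcv
      have e : -(z y) = (1/2) * (-(w y)) + (1/2) * (-(v y)) := by
        have : z y = (w y + v y) / 2 := rfl
        rw [this]; ring
      rw [e]
      linarith
    have hIw₁ := integ₁ w Mw hMw
    have hIv₁ := integ₁ v Mv hMv
    have hIz₁ := integ₁ z _ hMz
    have hIw₂ := integ₂ w hw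
    have hIv₂ := integ₂ v hvcont
    have hIz₂ := integ₂ z hzcont
    have hint₁ : ∫ x in X, g₁ (-(ctransform τ Y z x)) ∂μ
        ≤ ((∫ x in X, g₁ (-(ctransform τ Y w x)) ∂μ)
          + ∫ x in X, g₁ (-(ctransform τ Y v x)) ∂μ) / 2 := by
      have hcomb : IntegrableOn
          (fun x => (g₁ (-(ctransform τ Y w x)) + g₁ (-(ctransform τ Y v x))) / 2) X μ :=
        (hIw₁.add hIv₁).div_const 2
      have h := setIntegral_mono_on hIz₁ hcomb hXm hmid₁
      have e : ∫ x in X, (g₁ (-(ctransform τ Y w x)) + g₁ (-(ctransform τ Y v x))) / 2 ∂μ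
          = ((∫ x in X, g₁ (-(ctransform τ Y w x)) ∂μ)
            + ∫ x in X, g₁ (-(ctransform τ Y v x)) ∂μ) / 2 := by
        rw [integral_div, integral_add hIw₁ hIv₁]
      rw [e] at h
      exact h
    set h : EuclideanSpace ℝ (Fin d) → ℝ :=
      fun y => (g₂ (-(w y)) + g₂ (-(v y))) / 2 - g₂ (-(z y)) with hhdef
    have hhcont : ContinuousOn h Y :=
      (((hg₂c.comp_continuousOn hw.neg).add (hg₂c.comp_continuousOn hvcont.neg)).div_const
        2).sub (hg₂c.comp_continuousOn hzcont.neg)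
    have hhint : IntegrableOn h Y ν := hhcont.integrableOn_compact hY
    have hhnn : ∀ y ∈ Y, 0 ≤ h y := by
      intro y hy
      have := hmid₂ y hy
      have e : h y = (g₂ (-(w y)) + g₂ (-(v y))) / 2 - g₂ (-(z y)) := rfl
      rw [e]
      linarith
    have hInt_h : ∫ y in Y, h y ∂ν ≤ 0 := by
      have hLz : L v ≤ L z := hvm z hzcont
      have eH : ∫ y in Y, h y ∂ν
          = ((∫ y in Y, g₂ (-(w y)) ∂ν) + ∫ y in Y, g₂ (-(v y)) ∂ν) / 2
            - ∫ y in Y, g₂ (-(z y)) ∂ν := by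
        have e1 : ∫ y in Y, h y ∂ν = (∫ y in Y, (g₂ (-(w y)) + g₂ (-(v y))) / 2 ∂ν)
            - ∫ y in Y, g₂ (-(z y)) ∂ν :=
          integral_sub ((hIw₂.add hIv₂).div_const 2) hIz₂
        rw [e1, integral_div, integral_add hIw₂ hIv₂]
      have eLw := eL w
      have eLv := eL v
      have eLz := eL z
      rw [eH]
      linarith [hint₁, hLz, hLwv, eLw, eLv, eLz]
    have hInt_h0 : ∫ y in Y, h y ∂ν = 0 :=
      le_antisymm hInt_h (setIntegral_nonneg hYm hhnn)
    have hae : h =ᵐ[ν.restrict Y] 0 := by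
      rw [← integral_eq_zero_iff_of_nonneg_ae ((ae_restrict_iff' hYm).mpr (ae_of_all _ hhnn))
        hhint]
      exact hInt_h0
    intro y₁ hy₁
    by_contra hne
    have hcw : ContinuousWithinAt (fun y => w y - v y) Y y₁ := (hw y₁ hy₁).sub (hvcont y₁ hy₁)
    have hne' : w y₁ - v y₁ ≠ 0 := sub_ne_zero.mpr hne
    have hmem : {t : ℝ | t ≠ 0} ∈ 𝓝 (w y₁ - v y₁) :=
      (isOpen_compl_singleton (x := (0:ℝ))).mem_nhds hne'
    have hnhd := hcw hmem
    rw [Filter.mem_map, mem_nhdsWithin] at hnhd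
    obtain ⟨U, hUopen, hy₁U, hUsub⟩ := hnhd
    have hpos : ∀ y ∈ U ∩ Y, 0 < h y := by
      rintro y ⟨hyU, hyY⟩
      have hwv : w y ≠ v y := by
        have hmem2 := hUsub ⟨hyU, hyY⟩
        simp only [Set.mem_preimage, Set.mem_setOf_eq] at hmem2
        exact sub_ne_zero.mp hmem2
      have hnemem : -(w y) ≠ -(v y) := fun hcontra => hwv (neg_injective hcontra)
      have hcv := hg₂conv.2 (Set.mem_univ (-(w y))) (Set.mem_univ (-(v y))) hnemem
        (by norm_num : (0:ℝ) < 1/2) (by norm_num : (0:ℝ) < 1/2) (by norm_num)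
      simp only [smul_eq_mul] at hcv
      have e2 : (1/2 : ℝ) * (-(w y)) + (1/2 : ℝ) * (-(v y)) = -(z y) := by
        have : z y = (w y + v y) / 2 := rfl
        rw [this]; ring
      rw [e2] at hcv
      have e3 : h y = (g₂ (-(w y)) + g₂ (-(v y))) / 2 - g₂ (-(z y)) := rfl
      rw [e3]
      linarith
    have hUY : (U ∩ Y).Nonempty := ⟨y₁, hy₁U, hy₁⟩
    have hposm := hνfull U hUopen hUY
    have hsub2 : U ∩ Y ⊆ {y | h y ≠ 0} := fun y hy => ne_of_gt (hpos y hy)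
    have hz0 : ν.restrict Y {y | h y ≠ 0} = 0 := by
      have := hae
      rw [Filter.EventuallyEq, ae_iff] at this
      simpa using this
    have hz1 : ν.restrict Y (U ∩ Y) = 0 := measure_mono_null hsub2 hz0
    rw [Measure.restrict_apply' hYm, Set.inter_assoc, Set.inter_self] at hz1
    exact absurd hz1 (ne_of_gt hposm)
  exact ⟨v, hvcont, ⟨K, hvlip⟩, hvm, huniq⟩

end
end

section
/- Let g₁ and g₂ be real-valued functions on ℝ that are non-decreasing, bounded below, differentiable, and strictly convex, normalized so that g₁(0) = g₂(0) = 0. Then the set Γ := { v ∈ C(Y) : L(v) ≤ 0 and v^{cc} = v } is equi-bounded and equi-Lipschitz; i.e., there exist constants M ≥ 0 and L' ≥ 0 such that every v ∈ Γ satisfies sup_{y∈Y} |v(y)| ≤ M and is L'-Lipschitz on Y. -/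
open MeasureTheory Filter
open scoped ENNReal NNReal Topology

noncomputable section

/-- The double `c`-transform `v^{cc}(y) = inf_{x ∈ X} (c(x,y) - v^c(x))`. -/
def cctransform {d : ℕ} (τ : ℝ) (X Y : Set (EuclideanSpace ℝ (Fin d)))
    (v : EuclideanSpace ℝ (Fin d) → ℝ) (y : EuclideanSpace ℝ (Fin d)) : ℝ :=
  sInf ((fun x => cost τ x y - ctransform τ Y v x) '' X)

/-- Infima of families that pointwise differ by at most `K` differ by at most `K`. -/
private lemma csInf_le_csInf_add {α : Type*} {S : Set α} (hS : S.Nonempty)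
    {φ ψ : α → ℝ} {K : ℝ} (hφ : BddBelow (φ '' S))
    (h : ∀ a ∈ S, φ a ≤ ψ a + K) :
    sInf (φ '' S) ≤ sInf (ψ '' S) + K := by
  rw [← sub_le_iff_le_add]
  apply le_csInf (hS.image ψ)
  rintro b ⟨a, ha, rfl⟩
  have h1 : sInf (φ '' S) ≤ φ a := csInf_le hφ (Set.mem_image_of_mem φ ha)
  have h2 := h a ha
  linarith

private lemma cost_nonneg {d : ℕ} {τ : ℝ} (hτ : 0 ≤ τ) (x y : EuclideanSpace ℝ (Fin d)) :
    0 ≤ cost τ x y := mul_nonneg hτ (sq_nonneg _)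

private lemma cost_le {d : ℕ} {τ : ℝ} (hτ : 0 ≤ τ) {R : ℝ} {x y : EuclideanSpace ℝ (Fin d)}
    (h : ‖x - y‖ ≤ R) : cost τ x y ≤ τ * R ^ 2 := by
  have h0 := norm_nonneg (x - y)
  have h1 : ‖x - y‖ ^ 2 ≤ R ^ 2 := by nlinarith
  exact mul_le_mul_of_nonneg_left h1 hτ

private lemma cost_comm {d : ℕ} {τ : ℝ} (x y : EuclideanSpace ℝ (Fin d)) :
    cost τ x y = cost τ y x := by
  unfold cost
  rw [norm_sub_rev]

private lemma cost_sub_cost_le {d : ℕ} {τ R : ℝ} (hτ : 0 < τ)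
    {a a' b : EuclideanSpace ℝ (Fin d)} (h1 : ‖a - b‖ ≤ R) (h2 : ‖a' - b‖ ≤ R) :
    cost τ a b - cost τ a' b ≤ 2 * τ * R * ‖a - a'‖ := by
  have hd : ‖a - b‖ - ‖a' - b‖ ≤ ‖a - a'‖ := by
    calc ‖a - b‖ - ‖a' - b‖ ≤ ‖(a - b) - (a' - b)‖ := norm_sub_norm_le _ _
    _ = ‖a - a'‖ := by rw [sub_sub_sub_cancel_right]
  have hfact1 : 0 ≤ τ * ((‖a - b‖ + ‖a' - b‖) * (‖a - a'‖ - (‖a - b‖ - ‖a' - b‖))) :=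
    mul_nonneg hτ.le (mul_nonneg (add_nonneg (norm_nonneg _) (norm_nonneg _))
      (sub_nonneg.2 hd))
  have hfact2 : 0 ≤ τ * ((2 * R - (‖a - b‖ + ‖a' - b‖)) * ‖a - a'‖) :=
    mul_nonneg hτ.le (mul_nonneg (by linarith) (norm_nonneg _))
  unfold cost
  nlinarith [hfact1, hfact2]

/-- A monotone strictly convex function on `ℝ` is unbounded above. -/
private lemma exists_lt_apply (g : ℝ → ℝ) (hmono : Monotone g)
    (hconv : StrictConvexOn ℝ Set.univ g) (C : ℝ) : ∃ T : ℝ, C < g T := by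
  have h05 : g (1 / 2) < g 1 := by
    have h := hconv.2 (Set.mem_univ (0 : ℝ)) (Set.mem_univ (1 : ℝ))
      (by norm_num : (0 : ℝ) ≠ 1) (by norm_num : (0 : ℝ) < 1 / 2)
      (by norm_num : (0 : ℝ) < 1 / 2) (by norm_num : (1 / 2 : ℝ) + 1 / 2 = 1)
    have h0 : g 0 ≤ g (1 / 2) := hmono (by norm_num)
    simp only [smul_eq_mul, mul_zero, mul_one, zero_add] at h
    norm_num at h
    linarith
  set s : ℝ := 2 * (g 1 - g (1 / 2)) with hs
  have hs0 : 0 < s := by rw [hs]; linarith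
  have hslope : ∀ t : ℝ, 1 < t → g 1 + s * (t - 1) ≤ g t := by
    intro t ht
    have h := hconv.convexOn.slope_mono_adjacent (Set.mem_univ (1 / 2 : ℝ))
      (Set.mem_univ t) (by norm_num) ht
    have h1 : (g 1 - g (1 / 2)) / (1 - 1 / 2) = s := by rw [hs]; ring
    rw [h1] at h
    rw [le_div_iff₀ (by linarith : (0:ℝ) < t - 1)] at h
    linarith
  refine ⟨max 2 (1 + (C - g 1 + 1) / s), ?_⟩
  set T : ℝ := max 2 (1 + (C - g 1 + 1) / s) with hT
  have hT1 : (1 : ℝ) < T := lt_of_lt_of_le one_lt_two (le_max_left _ _)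
  have hT2 : (C - g 1 + 1) / s ≤ T - 1 := by
    have := le_max_right 2 (1 + (C - g 1 + 1) / s)
    linarith
  have h4 : C - g 1 + 1 ≤ s * (T - 1) := by
    rw [div_le_iff₀ hs0] at hT2
    linarith [hT2]
  have := hslope T hT1
  linarith

/-- If `g₁, g₂` are non-decreasing, bounded below, differentiable,
strictly convex, and normalized by `g₁(0) = g₂(0) = 0`, then the set
`Γ = { v ∈ C(Y) : L(v) ≤ 0, v^{cc} = v }` is equi-bounded and equi-Lipschitz. -/
theorem semidual_candidate_set_equibounded_equilipschitz
    {d : ℕ} (τ : ℝ) (hτ : 0 < τ)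
    (X Y : Set (EuclideanSpace ℝ (Fin d))) (hX : IsCompact X) (hY : IsCompact Y)
    (μ ν : Measure (EuclideanSpace ℝ (Fin d)))
    [IsProbabilityMeasure μ] [IsProbabilityMeasure ν]
    (hμX : μ Xᶜ = 0) (hνY : ν Yᶜ = 0)
    (g₁ g₂ : ℝ → ℝ)
    (hg₁mono : Monotone g₁) (hg₂mono : Monotone g₂)
    (hg₁bdd : BddBelow (Set.range g₁)) (hg₂bdd : BddBelow (Set.range g₂))
    (hg₁diff : Differentiable ℝ g₁) (hg₂diff : Differentiable ℝ g₂)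
    (hg₁conv : StrictConvexOn ℝ Set.univ g₁) (hg₂conv : StrictConvexOn ℝ Set.univ g₂)
    (hg₁zero : g₁ 0 = 0) (hg₂zero : g₂ 0 = 0) :
    ∃ (M : ℝ) (L' : ℝ≥0), 0 ≤ M ∧
      ∀ v : EuclideanSpace ℝ (Fin d) → ℝ, ContinuousOn v Y →
        semidual τ X Y μ ν g₁ g₂ v ≤ 0 →
        (∀ y ∈ Y, cctransform τ X Y v y = v y) →
        (∀ y ∈ Y, |v y| ≤ M) ∧ LipschitzOnWith L' v Y := by
  -- X and Y are nonempty since they carry probability measures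
  have hXne : X.Nonempty := by
    rcases X.eq_empty_or_nonempty with h | h
    · exfalso
      rw [h, Set.compl_empty, measure_univ] at hμX
      exact one_ne_zero hμX
    · exact h
  have hYne : Y.Nonempty := by
    rcases Y.eq_empty_or_nonempty with h | h
    · exfalso
      rw [h, Set.compl_empty, measure_univ] at hνY
      exact one_ne_zero hνY
    · exact h
  -- a uniform bound on distances between points of X ∪ Y
  obtain ⟨r, hr⟩ := (hX.isBounded.union hY.isBounded).exists_norm_le
  set R : ℝ := |r| + |r| with hRdef
  have hR0 : (0 : ℝ) ≤ R := by positivity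
  have hnorm : ∀ a ∈ X ∪ Y, ∀ b ∈ X ∪ Y, ‖a - b‖ ≤ R := by
    intro a ha b hb
    have h1 := hr a ha
    have h2 := hr b hb
    have h3 := le_abs_self r
    calc ‖a - b‖ ≤ ‖a‖ + ‖b‖ := norm_sub_le _ _
    _ ≤ R := by rw [hRdef]; linarith
  set K : ℝ := 2 * τ * R with hKdef
  have hK0 : (0 : ℝ) ≤ K := by positivity
  set C : ℝ := τ * R ^ 2 with hCdef
  have hC0 : (0 : ℝ) ≤ C := by positivity
  -- lower bounds of g₁, g₂
  set b₁ : ℝ := sInf (Set.range g₁) with hb₁def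
  set b₂ : ℝ := sInf (Set.range g₂) with hb₂def
  have hb₁ : ∀ t, b₁ ≤ g₁ t := fun t => csInf_le hg₁bdd ⟨t, rfl⟩
  have hb₂ : ∀ t, b₂ ≤ g₂ t := fun t => csInf_le hg₂bdd ⟨t, rfl⟩
  obtain ⟨T₁, hT₁⟩ := exists_lt_apply g₁ hg₁mono hg₁conv (-b₂)
  obtain ⟨T₂, hT₂⟩ := exists_lt_apply g₂ hg₂mono hg₂conv (-b₁)
  refine ⟨max 0 (max (C + T₁) (T₂ + K * R)), K.toNNReal, le_max_left _ _, ?_⟩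
  set M : ℝ := max 0 (max (C + T₁) (T₂ + K * R)) with hMdef
  have hM1 : C + T₁ ≤ M := le_trans (le_max_left _ _) (le_max_right _ _)
  have hM2 : T₂ + K * R ≤ M := le_trans (le_max_right _ _) (le_max_right _ _)
  intro v hv hL hvcc
  -- bound on v on Y
  obtain ⟨Mv, hMv⟩ : ∃ Mv, ∀ y ∈ Y, |v y| ≤ Mv := by
    obtain ⟨Cv, hCv⟩ := (hY.image_of_continuousOn hv).isBounded.exists_norm_le
    exact ⟨Cv, fun y hy => by simpa [Real.norm_eq_abs] using hCv _ (Set.mem_image_of_mem v hy)⟩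
  -- basic facts about u = v^c
  have himgY : ∀ x, BddBelow ((fun y => cost τ x y - v y) '' Y) := by
    intro x
    refine ⟨-Mv, ?_⟩
    rintro b ⟨y, hy, rfl⟩
    have h1 := (abs_le.1 (hMv y hy)).2
    have h2 := cost_nonneg hτ.le x y
    simp only
    linarith
  have hule : ∀ x, ∀ y ∈ Y, ctransform τ Y v x ≤ cost τ x y - v y := by
    intro x y hy
    exact csInf_le (himgY x) ⟨y, hy, rfl⟩
  have huub : ∀ x ∈ X, ctransform τ Y v x ≤ C + Mv := by
    intro x hx
    obtain ⟨y₀, hy₀⟩ := hYne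
    have h1 := hule x y₀ hy₀
    have h2 : cost τ x y₀ ≤ C := cost_le hτ.le (hnorm x (Or.inl hx) y₀ (Or.inr hy₀))
    have h3 := (abs_le.1 (hMv y₀ hy₀)).1
    linarith
  -- u is K-Lipschitz on X
  have hulip : ∀ x ∈ X, ∀ x' ∈ X,
      ctransform τ Y v x ≤ ctransform τ Y v x' + K * ‖x - x'‖ := by
    intro x hx x' hx'
    unfold ctransform
    apply csInf_le_csInf_add hYne (himgY x)
    intro y hy
    have h1 := cost_sub_cost_le hτ (hnorm x (Or.inl hx) y (Or.inr hy))
      (hnorm x' (Or.inl hx') y (Or.inr hy))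
    rw [hKdef]
    linarith
  have hulipschitz : LipschitzOnWith K.toNNReal (ctransform τ Y v) X := by
    rw [lipschitzOnWith_iff_dist_le_mul]
    intro x hx x' hx'
    rw [Real.dist_eq, dist_eq_norm, Real.coe_toNNReal _ hK0, abs_sub_le_iff]
    have h1 := hulip x hx x' hx'
    have h2 := hulip x' hx' x hx
    rw [norm_sub_rev x' x] at h2
    constructor <;> linarith
  have hucont : ContinuousOn (ctransform τ Y v) X := hulipschitz.continuousOn
  -- BddBelow for the cctransform images
  have hbddX : ∀ y, BddBelow ((fun x => cost τ x y - ctransform τ Y v x) '' X) := by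
    intro y
    refine ⟨-(C + Mv), ?_⟩
    rintro b ⟨x, hx, rfl⟩
    have h1 := huub x hx
    have h2 := cost_nonneg hτ.le x y
    simp only
    linarith
  -- v is K-Lipschitz on Y
  have hvlip : ∀ y ∈ Y, ∀ y' ∈ Y, v y ≤ v y' + K * ‖y - y'‖ := by
    intro y hy y' hy'
    rw [← hvcc y hy, ← hvcc y' hy']
    unfold cctransform
    apply csInf_le_csInf_add hXne (hbddX y)
    intro x hx
    have h1 := cost_sub_cost_le hτ (b := x) (hnorm y (Or.inr hy) x (Or.inl hx))
      (hnorm y' (Or.inr hy') x (Or.inl hx))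
    rw [cost_comm y x, cost_comm y' x] at h1
    rw [hKdef]
    linarith
  have hvlipschitz : LipschitzOnWith K.toNNReal v Y := by
    rw [lipschitzOnWith_iff_dist_le_mul]
    intro y hy y' hy'
    rw [Real.dist_eq, dist_eq_norm, Real.coe_toNNReal _ hK0, abs_sub_le_iff]
    have h1 := hvlip y hy y' hy'
    have h2 := hvlip y' hy' y hy
    rw [norm_sub_rev y' y] at h2
    constructor <;> linarith
  -- measure normalizations
  have hμX1 : (μ X).toReal = 1 := by
    have h := measure_add_measure_compl (μ := μ) hX.measurableSet
    rw [hμX, add_zero, measure_univ] at h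
    rw [h]
    simp
  have hνY1 : (ν Y).toReal = 1 := by
    have h := measure_add_measure_compl (μ := ν) hY.measurableSet
    rw [hνY, add_zero, measure_univ] at h
    rw [h]
    simp
  -- integrability
  have In₁ : IntegrableOn (fun x => g₁ (-(ctransform τ Y v x))) X μ := by
    apply ContinuousOn.integrableOn_compact hX
    exact hg₁diff.continuous.comp_continuousOn hucont.neg
  have In₂ : IntegrableOn (fun y => g₂ (-(v y))) Y ν :=
    (hg₂diff.continuous.comp_continuousOn hv.neg).integrableOn_compact hY
  simp only [semidual] at hL
  -- lower bounds on the two integrals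
  have hI₁lb : b₁ ≤ ∫ x in X, g₁ (-(ctransform τ Y v x)) ∂μ := by
    have h := setIntegral_ge_of_const_le hX.measurableSet (measure_ne_top μ X)
      (fun x _ => hb₁ _) In₁
    rwa [Measure.real, hμX1, one_smul] at h
  have hI₂lb : b₂ ≤ ∫ y in Y, g₂ (-(v y)) ∂ν := by
    have h := setIntegral_ge_of_const_le hY.measurableSet (measure_ne_top ν Y)
      (fun y _ => hb₂ _) In₂
    rwa [Measure.real, hνY1, one_smul] at h
  -- the max of u on X
  obtain ⟨x₁, hx₁X, hx₁max⟩ := hX.exists_isMaxOn hXne hucont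
  have hx₁max' : ∀ x ∈ X, ctransform τ Y v x ≤ ctransform τ Y v x₁ := fun x hx => hx₁max hx
  have hIB : g₁ (-(ctransform τ Y v x₁)) ≤ ∫ x in X, g₁ (-(ctransform τ Y v x)) ∂μ := by
    have h := setIntegral_ge_of_const_le hX.measurableSet (measure_ne_top μ X)
      (fun x hx => hg₁mono (neg_le_neg (hx₁max' x hx))) In₁
    rwa [Measure.real, hμX1, one_smul] at h
  have hux₁ : -T₁ < ctransform τ Y v x₁ := by
    by_contra h
    push_neg at h
    have hmono := hg₁mono (by linarith : T₁ ≤ -(ctransform τ Y v x₁))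
    linarith [hI₂lb, hIB, hT₁]
  -- upper bound on v
  have hvub : ∀ y ∈ Y, v y ≤ C + T₁ := by
    intro y hy
    rw [← hvcc y hy]
    unfold cctransform
    have hle : sInf ((fun x => cost τ x y - ctransform τ Y v x) '' X) ≤
        cost τ x₁ y - ctransform τ Y v x₁ := csInf_le (hbddX y) ⟨x₁, hx₁X, rfl⟩
    have hc : cost τ x₁ y ≤ C := cost_le hτ.le (hnorm x₁ (Or.inl hx₁X) y (Or.inr hy))
    linarith
  -- the max of v on Y
  obtain ⟨y₁, hy₁Y, hy₁max⟩ := hY.exists_isMaxOn hYne hv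
  have hy₁max' : ∀ y ∈ Y, v y ≤ v y₁ := fun y hy => hy₁max hy
  have hIA : g₂ (-(v y₁)) ≤ ∫ y in Y, g₂ (-(v y)) ∂ν := by
    have h := setIntegral_ge_of_const_le hY.measurableSet (measure_ne_top ν Y)
      (fun y hy => hg₂mono (neg_le_neg (hy₁max' y hy))) In₂
    rwa [Measure.real, hνY1, one_smul] at h
  have hvy₁ : -T₂ < v y₁ := by
    by_contra h
    push_neg at h
    have hmono := hg₂mono (by linarith : T₂ ≤ -(v y₁))
    linarith [hI₁lb, hIA, hT₂]
  -- lower bound on v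
  have hvlb : ∀ y ∈ Y, -(T₂ + K * R) ≤ v y := by
    intro y hy
    have h1 := hvlip y₁ hy₁Y y hy
    have hn : ‖y₁ - y‖ ≤ R := hnorm y₁ (Or.inr hy₁Y) y (Or.inr hy)
    have h2 : K * ‖y₁ - y‖ ≤ K * R := mul_le_mul_of_nonneg_left hn hK0
    linarith
  refine ⟨fun y hy => abs_le.2 ⟨?_, ?_⟩, hvlipschitz⟩
  · have := hvlb y hy
    linarith
  · have := hvub y hy
    linarith

end
end

section
/- Let Ψ₁, Ψ₂ be entropy functions that are strictly convex on (0,∞) and finite on (0,∞). Then the α-scaled unbalanced optimal transport cost converges to the optimal transport cost as α → ∞: lim_{α→∞} C_ub^α(μ,ν) = C(μ,ν). -/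
open MeasureTheory Filter
open scoped ENNReal NNReal Topology Classical

noncomputable section

/-- An entropy function `Ψ : ℝ → [0,∞]`: convex, lower semicontinuous, non-negative
(automatic from the codomain), `Ψ(x) = ∞` for `x < 0`, `Ψ(1) = 0`, and superlinear. -/
structure IsEntropy (Ψ : ℝ → ℝ≥0∞) : Prop where
  convex : ∀ x y : ℝ, ∀ t : ℝ, 0 ≤ t → t ≤ 1 →
    Ψ (t * x + (1 - t) * y) ≤ ENNReal.ofReal t * Ψ x + ENNReal.ofReal (1 - t) * Ψ y
  lsc : LowerSemicontinuous Ψ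
  eq_top_of_neg : ∀ x : ℝ, x < 0 → Ψ x = ∞
  one_eq_zero : Ψ 1 = 0
  superlinear : Tendsto (fun t : ℝ => Ψ t / ENNReal.ofReal t) atTop (𝓝 ∞)

/-- The Csiszár divergence `D_Ψ(ρ|σ) = ∫ Ψ(dρ/dσ) dσ` if `ρ ≪ σ`, and `∞` otherwise. -/
def csiszar {Z : Type*} [MeasurableSpace Z] (Ψ : ℝ → ℝ≥0∞) (ρ σ : Measure Z) : ℝ≥0∞ :=
  if ρ ≪ σ then ∫⁻ z, Ψ ((ρ.rnDeriv σ z).toReal) ∂σ else ∞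

/-- The objective of the `α`-scaled unbalanced optimal transport problem:
`∫ c dπ + α D_{Ψ₁}(π₀|μ) + α D_{Ψ₂}(π₁|ν)`. -/
def uotObj {d : ℕ} (τ α : ℝ) (Ψ₁ Ψ₂ : ℝ → ℝ≥0∞)
    (μ ν : Measure (EuclideanSpace ℝ (Fin d)))
    (π : Measure (EuclideanSpace ℝ (Fin d) × EuclideanSpace ℝ (Fin d))) : ℝ≥0∞ :=
  (∫⁻ z, ENNReal.ofReal (cost τ z.1 z.2) ∂π)
    + ENNReal.ofReal α * csiszar Ψ₁ (π.map Prod.fst) μ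
    + ENNReal.ofReal α * csiszar Ψ₂ (π.map Prod.snd) ν

/-- The `α`-scaled unbalanced optimal transport cost `C_ub^α(μ,ν)`, the infimum of the
objective over finite positive Borel measures `π` supported on `X × Y`. -/
def UOTcost {d : ℕ} (τ α : ℝ) (Ψ₁ Ψ₂ : ℝ → ℝ≥0∞) (X Y : Set (EuclideanSpace ℝ (Fin d)))
    (μ ν : Measure (EuclideanSpace ℝ (Fin d))) : ℝ≥0∞ :=
  ⨅ (π : Measure (EuclideanSpace ℝ (Fin d) × EuclideanSpace ℝ (Fin d)))
    (_ : IsFiniteMeasure π) (_ : π ((X ×ˢ Y)ᶜ) = 0), uotObj τ α Ψ₁ Ψ₂ μ ν π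

/-- The optimal transport cost `C(μ,ν) = inf_{π ∈ Π(μ,ν)} ∫ c dπ`. -/
def OTcost {d : ℕ} (τ : ℝ) (μ ν : Measure (EuclideanSpace ℝ (Fin d))) : ℝ≥0∞ :=
  ⨅ (π : Measure (EuclideanSpace ℝ (Fin d) × EuclideanSpace ℝ (Fin d)))
    (_ : π.map Prod.fst = μ ∧ π.map Prod.snd = ν),
    ∫⁻ z, ENNReal.ofReal (cost τ z.1 z.2) ∂π


/-- `Ψ` is strictly convex on `(0,∞)`. -/
def StrictlyConvexOnPos (Ψ : ℝ → ℝ≥0∞) : Prop :=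
  ∀ x ∈ Set.Ioi (0:ℝ), ∀ y ∈ Set.Ioi (0:ℝ), x ≠ y → ∀ t : ℝ, 0 < t → t < 1 →
    Ψ (t * x + (1 - t) * y) < ENNReal.ofReal t * Ψ x + ENNReal.ofReal (1 - t) * Ψ y

/-- `Ψ` is nonincreasing on `[0,1]` (indeed on `(-∞,1]`). -/
lemma psi_anti {Ψ : ℝ → ℝ≥0∞} (hΨ : IsEntropy Ψ) {x y : ℝ} (hxy : x ≤ y) (hy : y ≤ 1) :
    Ψ y ≤ Ψ x := by
  rcases eq_or_lt_of_le hxy with rfl | hlt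
  · exact le_rfl
  rcases eq_or_lt_of_le hy with rfl | hy1
  · simp [hΨ.one_eq_zero]
  have hx1 : x < 1 := hlt.trans hy1
  set w : ℝ := (1 - y) / (1 - x) with hw
  have hw0 : 0 ≤ w := div_nonneg (by linarith) (by linarith)
  have hw1 : w ≤ 1 := by
    rw [div_le_one (by linarith)]; linarith
  have hcomb : w * x + (1 - w) * 1 = y := by
    have h1x : (1:ℝ) - x ≠ 0 := by linarith
    field_simp [hw]
    have := div_mul_cancel₀ (1 - y) h1x; rw [← hw] at this; linarith
  have := hΨ.convex x 1 w hw0 hw1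
  rw [hcomb, hΨ.one_eq_zero, mul_zero, add_zero] at this
  calc Ψ y ≤ ENNReal.ofReal w * Ψ x := this
    _ ≤ 1 * Ψ x := by
        gcongr
        exact ENNReal.ofReal_le_one.2 hw1
    _ = Ψ x := one_mul _
/-- Strict convexity forces `Ψ > 0` away from `1`. -/
lemma psi_pos {Ψ : ℝ → ℝ≥0∞} (hΨ : IsEntropy Ψ) (hsc : StrictlyConvexOnPos Ψ)
    {x : ℝ} (hx : 0 < x) (hne : x ≠ 1) : Ψ x ≠ 0 := by
  intro h0
  have := hsc x (Set.mem_Ioi.2 hx) 1 (Set.mem_Ioi.2 one_pos) hne (1/2) (by norm_num) (by norm_num)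
  rw [h0, hΨ.one_eq_zero, mul_zero, mul_zero, add_zero] at this
  exact (not_lt.2 zero_le) this

/-- Tail estimate from convexity: for `t > 1 + δ`, `t · Ψ(1+δ) ≤ (1+δ) · Ψ t`. -/
lemma psi_tail {Ψ : ℝ → ℝ≥0∞} (hΨ : IsEntropy Ψ) {δ : ℝ} (hδ : 0 < δ)
    {t : ℝ} (ht : 1 + δ < t) :
    ENNReal.ofReal t * Ψ (1 + δ) ≤ ENNReal.ofReal (1 + δ) * Ψ t := by
  set w : ℝ := δ / (t - 1) with hw
  have ht1 : (1:ℝ) < t := by linarith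
  have hw0 : 0 ≤ w := div_nonneg hδ.le (by linarith)
  have hw1 : w ≤ 1 := by rw [div_le_one (by linarith)]; linarith
  have hcomb : w * t + (1 - w) * 1 = 1 + δ := by
    have h1t : t - 1 ≠ 0 := by intro h; linarith [sub_eq_zero.mp h]
    field_simp [hw]
    have := div_mul_cancel₀ δ h1t; rw [← hw] at this; linarith
  have hkey : Ψ (1 + δ) ≤ ENNReal.ofReal w * Ψ t := by
    have := hΨ.convex t 1 w hw0 hw1
    rw [hcomb, hΨ.one_eq_zero, mul_zero, add_zero] at this
    exact this
  calc ENNReal.ofReal t * Ψ (1 + δ)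
      ≤ ENNReal.ofReal t * (ENNReal.ofReal w * Ψ t) := by gcongr
    _ = ENNReal.ofReal (t * w) * Ψ t := by
        rw [ENNReal.ofReal_mul (by linarith), mul_assoc]
    _ ≤ ENNReal.ofReal (1 + δ) * Ψ t := by
        have : t * w ≤ 1 + δ := by
          rw [hw, mul_div_assoc', div_le_iff₀ (by linarith : (0:ℝ) < t - 1)]
          nlinarith
        exact mul_le_mul_left (ENNReal.ofReal_le_ofReal this) _

section DivBounds
variable {Z : Type*} [MeasurableSpace Z]

/-- Lower-deficiency bound: `∫ (1 - f) dμ ≤ δ + D / Ψ(1-δ)`. -/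
lemma div_bound_lower {Ψ : ℝ → ℝ≥0∞} (hΨ : IsEntropy Ψ) (hsc : StrictlyConvexOnPos Ψ)
    (hfin : ∀ x : ℝ, 0 < x → Ψ x ≠ ∞) {δ : ℝ} (hδ0 : 0 < δ) (hδ1 : δ < 1)
    (ρ μ : Measure Z) [IsFiniteMeasure ρ] [IsProbabilityMeasure μ] :
    ∫⁻ x, (1 - ρ.rnDeriv μ x) ∂μ ≤
      ENNReal.ofReal δ + (∫⁻ x, Ψ (ρ.rnDeriv μ x).toReal ∂μ) * (Ψ (1 - δ))⁻¹ := by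
  have hc0 : Ψ (1 - δ) ≠ 0 := psi_pos hΨ hsc (by linarith) (by intro h; linarith)
  have hcT : (Ψ (1 - δ))⁻¹ ≠ ∞ := by simpa [ENNReal.inv_ne_top] using hc0
  have hae : ∀ᵐ x ∂μ, (1 - ρ.rnDeriv μ x) ≤
      ENNReal.ofReal δ + Ψ (ρ.rnDeriv μ x).toReal * (Ψ (1 - δ))⁻¹ := by
    filter_upwards [Measure.rnDeriv_lt_top ρ μ] with x hx
    set e := ρ.rnDeriv μ x with he
    set t := e.toReal with htdef
    have het : e = ENNReal.ofReal t := (ENNReal.ofReal_toReal hx.ne).symm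
    rcases le_or_gt (1 - δ) t with hcase | hcase
    · have : (1:ℝ≥0∞) - e ≤ ENNReal.ofReal δ := by
        rw [het, ← ENNReal.ofReal_one, ← ENNReal.ofReal_sub _ ENNReal.toReal_nonneg]
        exact ENNReal.ofReal_le_ofReal (by linarith)
      exact this.trans le_self_add
    · have h1 : Ψ (1 - δ) ≤ Ψ t := psi_anti hΨ hcase.le (by linarith)
      have h2 : (1:ℝ≥0∞) ≤ Ψ t * (Ψ (1 - δ))⁻¹ := by
        rw [← ENNReal.mul_inv_cancel hc0 (hfin _ (by linarith))]
        exact mul_le_mul_left h1 _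
      calc (1:ℝ≥0∞) - e ≤ 1 := tsub_le_self
        _ ≤ Ψ t * (Ψ (1 - δ))⁻¹ := h2
        _ ≤ _ := le_add_self
  calc ∫⁻ x, (1 - ρ.rnDeriv μ x) ∂μ
      ≤ ∫⁻ x, (ENNReal.ofReal δ + Ψ (ρ.rnDeriv μ x).toReal * (Ψ (1 - δ))⁻¹) ∂μ :=
        lintegral_mono_ae hae
    _ = ∫⁻ _, ENNReal.ofReal δ ∂μ + ∫⁻ x, Ψ (ρ.rnDeriv μ x).toReal * (Ψ (1 - δ))⁻¹ ∂μ :=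
        lintegral_add_left measurable_const _
    _ ≤ ENNReal.ofReal δ * μ Set.univ + (∫⁻ x, Ψ (ρ.rnDeriv μ x).toReal ∂μ) * (Ψ (1 - δ))⁻¹ := by
        rw [lintegral_const, lintegral_mul_const' _ _ hcT]
    _ ≤ _ := by
        rw [measure_univ, mul_one]

/-- Upper-excess bound: `∫ (f - 1) dμ ≤ δ + (1+δ) D / Ψ(1+δ)`. -/
lemma div_bound_upper {Ψ : ℝ → ℝ≥0∞} (hΨ : IsEntropy Ψ) (hsc : StrictlyConvexOnPos Ψ)
    (hfin : ∀ x : ℝ, 0 < x → Ψ x ≠ ∞) {δ : ℝ} (hδ0 : 0 < δ)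
    (ρ μ : Measure Z) [IsFiniteMeasure ρ] [IsProbabilityMeasure μ] :
    ∫⁻ x, (ρ.rnDeriv μ x - 1) ∂μ ≤
      ENNReal.ofReal δ + (∫⁻ x, Ψ (ρ.rnDeriv μ x).toReal ∂μ)
        * (ENNReal.ofReal (1 + δ) * (Ψ (1 + δ))⁻¹) := by
  have hc0 : Ψ (1 + δ) ≠ 0 := psi_pos hΨ hsc (by linarith) (by intro h; linarith)
  have hcT : ENNReal.ofReal (1 + δ) * (Ψ (1 + δ))⁻¹ ≠ ∞ :=
    ENNReal.mul_ne_top ENNReal.ofReal_ne_top (by simpa [ENNReal.inv_ne_top] using hc0)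
  have hae : ∀ᵐ x ∂μ, (ρ.rnDeriv μ x - 1) ≤
      ENNReal.ofReal δ + Ψ (ρ.rnDeriv μ x).toReal * (ENNReal.ofReal (1 + δ) * (Ψ (1 + δ))⁻¹) := by
    filter_upwards [Measure.rnDeriv_lt_top ρ μ] with x hx
    set e := ρ.rnDeriv μ x with he
    set t := e.toReal with htdef
    have het : e = ENNReal.ofReal t := (ENNReal.ofReal_toReal hx.ne).symm
    rcases le_or_gt t (1 + δ) with hcase | hcase
    · have : e - 1 ≤ ENNReal.ofReal δ := by
        rw [het, ← ENNReal.ofReal_one, ← ENNReal.ofReal_sub _ zero_le_one]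
        exact ENNReal.ofReal_le_ofReal (by linarith)
      exact this.trans le_self_add
    · have hkey := psi_tail hΨ hδ0 hcase
      have h2 : e ≤ Ψ t * (ENNReal.ofReal (1 + δ) * (Ψ (1 + δ))⁻¹) := by
        rw [het]
        have := mul_le_mul_left hkey (Ψ (1 + δ))⁻¹
        rw [mul_assoc, ENNReal.mul_inv_cancel hc0 (hfin _ (by linarith)), mul_one] at this
        calc ENNReal.ofReal t ≤ ENNReal.ofReal (1 + δ) * Ψ t * (Ψ (1 + δ))⁻¹ := this
          _ = Ψ t * (ENNReal.ofReal (1 + δ) * (Ψ (1 + δ))⁻¹) := by ring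
      calc e - 1 ≤ e := tsub_le_self
        _ ≤ _ := h2.trans le_add_self
  calc ∫⁻ x, (ρ.rnDeriv μ x - 1) ∂μ
      ≤ ∫⁻ x, (ENNReal.ofReal δ
          + Ψ (ρ.rnDeriv μ x).toReal * (ENNReal.ofReal (1 + δ) * (Ψ (1 + δ))⁻¹)) ∂μ :=
        lintegral_mono_ae hae
    _ = ∫⁻ _, ENNReal.ofReal δ ∂μ
          + ∫⁻ x, Ψ (ρ.rnDeriv μ x).toReal * (ENNReal.ofReal (1 + δ) * (Ψ (1 + δ))⁻¹) ∂μ :=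
        lintegral_add_left measurable_const _
    _ ≤ ENNReal.ofReal δ + (∫⁻ x, Ψ (ρ.rnDeriv μ x).toReal ∂μ)
          * (ENNReal.ofReal (1 + δ) * (Ψ (1 + δ))⁻¹) := by
        rw [lintegral_const, lintegral_mul_const' _ _ hcT, measure_univ, mul_one]

end DivBounds

section Surgery
variable {A B : Type*} [MeasurableSpace A] [MeasurableSpace B]

/-- Truncation function `F t = min 1 t⁻¹`. -/
noncomputable def trunc (t : ℝ≥0∞) : ℝ≥0∞ := min 1 t⁻¹

lemma trunc_measurable : Measurable trunc := measurable_const.min measurable_inv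

lemma trunc_le_one (t : ℝ≥0∞) : trunc t ≤ 1 := min_le_left _ _

lemma mul_trunc_le_one (t : ℝ≥0∞) : t * trunc t ≤ 1 := by
  rcases eq_or_ne t 0 with rfl | h0
  · simp
  rcases eq_or_ne t ∞ with rfl | hT
  · simp [trunc]
  calc t * trunc t ≤ t * t⁻¹ := mul_le_mul_right (min_le_right _ _) _
    _ = 1 := ENNReal.mul_inv_cancel h0 hT

lemma mul_one_sub_trunc_le (e : ℝ≥0∞) (he : e ≠ ∞) : e * (1 - trunc e) ≤ e - 1 := by
  rcases le_or_gt e 1 with h1 | h1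
  · have : trunc e = 1 := min_eq_left (ENNReal.one_le_inv.2 h1)
    simp [this]
  · have : trunc e = e⁻¹ := min_eq_right (ENNReal.inv_le_one.2 h1.le)
    rw [this, ENNReal.mul_sub (fun _ _ => he), mul_one,
      ENNReal.mul_inv_cancel (by positivity) he]

lemma one_sub_mul_le (a b : ℝ≥0∞) (ha : a ≤ 1) (hb : b ≤ 1) :
    1 - a * b ≤ (1 - a) + (1 - b) := by
  have hab : a * b ≤ a := by
    calc a * b ≤ a * 1 := mul_le_mul_right hb _
      _ = a := mul_one _
  have h2 : a - a * b ≤ 1 - b := by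
    calc a - a * b = a * (1 - b) := by
          rw [ENNReal.mul_sub (fun _ _ => (lt_of_le_of_lt ha (by norm_num)).ne), mul_one]
      _ ≤ 1 * (1 - b) := mul_le_mul_left ha _
      _ = 1 - b := one_mul _
  rw [← tsub_add_tsub_cancel ha hab]
  exact add_le_add_right h2 _

/-- Marginal of a first-coordinate density. -/
lemma map_fst_withDensity (π : Measure (A × B)) (k : A → ℝ≥0∞) (hk : Measurable k) :
    (π.withDensity (fun z => k z.1)).map Prod.fst = (π.map Prod.fst).withDensity k := by
  ext s hs
  rw [Measure.map_apply measurable_fst hs, withDensity_apply _ (measurable_fst hs),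
    withDensity_apply _ hs, setLIntegral_map hs hk measurable_fst]

lemma map_snd_withDensity (π : Measure (A × B)) (k : B → ℝ≥0∞) (hk : Measurable k) :
    (π.withDensity (fun z => k z.2)).map Prod.snd = (π.map Prod.snd).withDensity k := by
  ext s hs
  rw [Measure.map_apply measurable_snd hs, withDensity_apply _ (measurable_snd hs),
    withDensity_apply _ hs, setLIntegral_map hs hk measurable_snd]

end Surgery

section Surgery2
variable {A B : Type*} [MeasurableSpace A] [MeasurableSpace B]

set_option maxHeartbeats 1000000 in
/-- **Surgery lemma**: from an approximate coupling `π` we construct an exact coupling `π'`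
of `μ` and `ν` whose cost exceeds that of `π` by at most `K` times the marginal defects. -/
lemma surgery (C : A × B → ℝ≥0∞) (hC : Measurable C)
    (X : Set A) (Y : Set B) (hXm : MeasurableSet X) (hYm : MeasurableSet Y)
    (K : ℝ≥0∞) (hK : ∀ z : A × B, z.1 ∈ X → z.2 ∈ Y → C z ≤ K)
    (μ : Measure A) (ν : Measure B) [IsProbabilityMeasure μ] [IsProbabilityMeasure ν]
    (hμX : μ Xᶜ = 0) (hνY : ν Yᶜ = 0)
    (π : Measure (A × B)) [IsFiniteMeasure π]
    (h1 : π.map Prod.fst ≪ μ) (h2 : π.map Prod.snd ≪ ν) :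
    ∃ π' : Measure (A × B), π'.map Prod.fst = μ ∧ π'.map Prod.snd = ν ∧
      ∫⁻ z, C z ∂π' ≤ ∫⁻ z, C z ∂π +
        K * (∫⁻ x, (1 - (π.map Prod.fst).rnDeriv μ x) ∂μ
           + ∫⁻ x, ((π.map Prod.fst).rnDeriv μ x - 1) ∂μ
           + ∫⁻ y, ((π.map Prod.snd).rnDeriv ν y - 1) ∂ν) := by
  haveI : IsFiniteMeasure (π.map Prod.fst) :=
    ⟨by rw [Measure.map_apply measurable_fst MeasurableSet.univ]; exact measure_lt_top _ _⟩
  haveI : IsFiniteMeasure (π.map Prod.snd) :=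
    ⟨by rw [Measure.map_apply measurable_snd MeasurableSet.univ]; exact measure_lt_top _ _⟩
  set f := (π.map Prod.fst).rnDeriv μ with hf_def
  set g := (π.map Prod.snd).rnDeriv ν with hg_def
  have hf : Measurable f := Measure.measurable_rnDeriv _ _
  have hg : Measurable g := Measure.measurable_rnDeriv _ _
  have htf : Measurable (fun x => trunc (f x)) := trunc_measurable.comp hf
  have htg : Measurable (fun y => trunc (g y)) := trunc_measurable.comp hg
  set h : A × B → ℝ≥0∞ := fun z => trunc (f z.1) * trunc (g z.2) with hh_def
  have hh : Measurable h := (htf.comp measurable_fst).mul (htg.comp measurable_snd)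
  have hh1 : ∀ z, h z ≤ 1 := fun z =>
    le_trans (mul_le_mul' (trunc_le_one _) (trunc_le_one _)) (by norm_num)
  set πt : Measure (A × B) := π.withDensity h with hπt_def
  have hπt_le : πt ≤ π := by
    calc πt ≤ π.withDensity 1 := withDensity_mono (Filter.Eventually.of_forall hh1)
      _ = π := withDensity_one
  haveI : IsFiniteMeasure πt :=
    ⟨lt_of_le_of_lt (Measure.le_iff'.1 hπt_le Set.univ) (measure_lt_top _ _)⟩
  -- first marginal of `πt` is dominated by `μ`
  have hmarg1 : πt.map Prod.fst ≤ μ := by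
    have step1 : πt ≤ π.withDensity (fun z => trunc (f z.1)) := by
      apply withDensity_mono
      apply Filter.Eventually.of_forall
      intro z
      calc h z ≤ trunc (f z.1) * 1 := mul_le_mul_right (trunc_le_one _) _
        _ = trunc (f z.1) := mul_one _
    calc πt.map Prod.fst ≤ (π.withDensity (fun z => trunc (f z.1))).map Prod.fst :=
          Measure.map_mono step1 measurable_fst
      _ = (π.map Prod.fst).withDensity (fun x => trunc (f x)) :=
          map_fst_withDensity π (fun x => trunc (f x)) htf
      _ = (μ.withDensity f).withDensity (fun x => trunc (f x)) := by
          rw [Measure.withDensity_rnDeriv_eq _ _ h1]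
      _ = μ.withDensity (fun x => f x * trunc (f x)) := by
          rw [← withDensity_mul _ hf htf]; rfl
      _ ≤ μ.withDensity 1 := withDensity_mono (Filter.Eventually.of_forall fun x =>
          mul_trunc_le_one _)
      _ = μ := withDensity_one
  have hmarg2 : πt.map Prod.snd ≤ ν := by
    have step1 : πt ≤ π.withDensity (fun z => trunc (g z.2)) := by
      apply withDensity_mono
      apply Filter.Eventually.of_forall
      intro z
      calc h z ≤ 1 * trunc (g z.2) := mul_le_mul_left (trunc_le_one _) _
        _ = trunc (g z.2) := one_mul _
    calc πt.map Prod.snd ≤ (π.withDensity (fun z => trunc (g z.2))).map Prod.snd :=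
          Measure.map_mono step1 measurable_snd
      _ = (π.map Prod.snd).withDensity (fun y => trunc (g y)) :=
          map_snd_withDensity π (fun y => trunc (g y)) htg
      _ = (ν.withDensity g).withDensity (fun y => trunc (g y)) := by
          rw [Measure.withDensity_rnDeriv_eq _ _ h2]
      _ = ν.withDensity (fun y => g y * trunc (g y)) := by
          rw [← withDensity_mul _ hg htg]; rfl
      _ ≤ ν.withDensity 1 := withDensity_mono (Filter.Eventually.of_forall fun y =>
          mul_trunc_le_one _)
      _ = ν := withDensity_one
  haveI : IsFiniteMeasure (πt.map Prod.fst) :=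
    ⟨lt_of_le_of_lt (Measure.le_iff'.1 hmarg1 Set.univ) (measure_lt_top _ _)⟩
  haveI : IsFiniteMeasure (πt.map Prod.snd) :=
    ⟨lt_of_le_of_lt (Measure.le_iff'.1 hmarg2 Set.univ) (measure_lt_top _ _)⟩
  set r₁ : Measure A := μ - πt.map Prod.fst with hr₁_def
  set r₂ : Measure B := ν - πt.map Prod.snd with hr₂_def
  haveI : IsFiniteMeasure r₁ :=
    ⟨lt_of_le_of_lt (Measure.le_iff'.1 Measure.sub_le Set.univ) (measure_lt_top _ _)⟩
  haveI : IsFiniteMeasure r₂ :=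
    ⟨lt_of_le_of_lt (Measure.le_iff'.1 Measure.sub_le Set.univ) (measure_lt_top _ _)⟩
  set s : ℝ≥0∞ := 1 - πt Set.univ with hs_def
  have hsne : s ≠ ∞ := (lt_of_le_of_lt tsub_le_self (by norm_num : (1:ℝ≥0∞) < ∞)).ne
  have hm1univ : (πt.map Prod.fst) Set.univ = πt Set.univ := by
    rw [Measure.map_apply measurable_fst MeasurableSet.univ]; rfl
  have hm2univ : (πt.map Prod.snd) Set.univ = πt Set.univ := by
    rw [Measure.map_apply measurable_snd MeasurableSet.univ]; rfl
  have hr₁univ : r₁ Set.univ = s := by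
    rw [hr₁_def, Measure.sub_apply MeasurableSet.univ hmarg1, measure_univ, hm1univ]
  have hr₂univ : r₂ Set.univ = s := by
    rw [hr₂_def, Measure.sub_apply MeasurableSet.univ hmarg2, measure_univ, hm2univ]
  set π' : Measure (A × B) := πt + s⁻¹ • (r₁.prod r₂) with hπ'_def
  have hsmulA : ∀ m : Measure A, m Set.univ = s → s⁻¹ • (s • m) = m := by
    intro m hm
    rcases eq_or_ne s 0 with hs0 | hs0
    · have hm0 : m = 0 := Measure.measure_univ_eq_zero.1 (by rw [hm, hs0])
      simp [hm0]
    · rw [smul_smul, ENNReal.inv_mul_cancel hs0 hsne, one_smul]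
  have hsmulB : ∀ m : Measure B, m Set.univ = s → s⁻¹ • (s • m) = m := by
    intro m hm
    rcases eq_or_ne s 0 with hs0 | hs0
    · have hm0 : m = 0 := Measure.measure_univ_eq_zero.1 (by rw [hm, hs0])
      simp [hm0]
    · rw [smul_smul, ENNReal.inv_mul_cancel hs0 hsne, one_smul]
  have hmargs1 : π'.map Prod.fst = μ := by
    rw [hπ'_def, Measure.map_add _ _ measurable_fst, Measure.map_smul,
      Measure.map_fst_prod, hr₂univ, hsmulA r₁ hr₁univ, add_comm]
    exact Measure.sub_add_cancel_of_le hmarg1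
  have hmargs2 : π'.map Prod.snd = ν := by
    rw [hπ'_def, Measure.map_add _ _ measurable_snd, Measure.map_smul,
      Measure.map_snd_prod, hr₁univ, hsmulB r₂ hr₂univ, add_comm]
    exact Measure.sub_add_cancel_of_le hmarg2
  -- cost of `πt` is at most the cost of `π`
  have hcost_t : ∫⁻ z, C z ∂πt ≤ ∫⁻ z, C z ∂π := by
    rw [hπt_def, lintegral_withDensity_eq_lintegral_mul _ hh hC]
    apply lintegral_mono
    intro z
    calc (h * C) z = h z * C z := rfl
      _ ≤ 1 * C z := mul_le_mul_left (hh1 z) _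
      _ = C z := one_mul _
  -- cost of the remainder product
  have hprodnull : (r₁.prod r₂) ((X ×ˢ Y)ᶜ) = 0 := by
    have hr₁X : r₁ Xᶜ = 0 :=
      le_antisymm (le_trans (Measure.le_iff'.1 Measure.sub_le _) hμX.le) zero_le
    have hr₂Y : r₂ Yᶜ = 0 :=
      le_antisymm (le_trans (Measure.le_iff'.1 Measure.sub_le _) hνY.le) zero_le
    have hsub : ((X ×ˢ Y)ᶜ : Set (A × B)) ⊆ (Xᶜ ×ˢ Set.univ) ∪ (Set.univ ×ˢ Yᶜ) := by
      intro z hz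
      rw [Set.mem_compl_iff, Set.mem_prod, not_and_or] at hz
      rcases hz with hz | hz
      · exact Or.inl ⟨hz, trivial⟩
      · exact Or.inr ⟨trivial, hz⟩
    refine measure_mono_null hsub (measure_union_null ?_ ?_)
    · rw [Measure.prod_prod, hr₁X, zero_mul]
    · rw [Measure.prod_prod, hr₂Y, mul_zero]
  have hprodcost : ∫⁻ z, C z ∂(r₁.prod r₂) ≤ K * (s * s) := by
    calc ∫⁻ z, C z ∂(r₁.prod r₂)
        = ∫⁻ z in X ×ˢ Y, C z ∂(r₁.prod r₂) + ∫⁻ z in (X ×ˢ Y)ᶜ, C z ∂(r₁.prod r₂) :=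
          (lintegral_add_compl _ (hXm.prod hYm)).symm
      _ = ∫⁻ z in X ×ˢ Y, C z ∂(r₁.prod r₂) := by
          rw [setLIntegral_measure_zero _ _ hprodnull, add_zero]
      _ ≤ ∫⁻ _ in X ×ˢ Y, K ∂(r₁.prod r₂) :=
          setLIntegral_mono measurable_const (fun z hz => hK z hz.1 hz.2)
      _ = K * (r₁.prod r₂) (X ×ˢ Y) := setLIntegral_const _ _
      _ ≤ K * (s * s) := by
          apply mul_le_mul_right
          calc (r₁.prod r₂) (X ×ˢ Y) ≤ (r₁.prod r₂) Set.univ :=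
                measure_mono (Set.subset_univ _)
            _ = s * s := by
                rw [← Set.univ_prod_univ, Measure.prod_prod, hr₁univ, hr₂univ]
  have hsmulcost : s⁻¹ * ∫⁻ z, C z ∂(r₁.prod r₂) ≤ K * s := by
    rcases eq_or_ne s 0 with hs0 | hs0
    · have hz : ∫⁻ z, C z ∂(r₁.prod r₂) = 0 :=
        le_antisymm (by simpa [hs0] using hprodcost) zero_le
      simp [hz, hs0]
    · calc s⁻¹ * ∫⁻ z, C z ∂(r₁.prod r₂) ≤ s⁻¹ * (K * (s * s)) :=
            mul_le_mul_right hprodcost _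
        _ = (s⁻¹ * s) * (K * s) := by ring
        _ = K * s := by rw [ENNReal.inv_mul_cancel hs0 hsne, one_mul]
  -- the defect `s` is controlled by the marginal defects
  have hπuniv : π Set.univ = ∫⁻ x, f x ∂μ := by
    rw [hf_def, Measure.lintegral_rnDeriv h1,
      Measure.map_apply measurable_fst MeasurableSet.univ]
    rfl
  have hone : (1 : ℝ≥0∞) - π Set.univ ≤ ∫⁻ x, (1 - f x) ∂μ := by
    rw [tsub_le_iff_right, hπuniv]
    calc (1:ℝ≥0∞) = ∫⁻ _, (1:ℝ≥0∞) ∂μ := by simp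
      _ ≤ ∫⁻ x, ((1 - f x) + f x) ∂μ := lintegral_mono fun x => le_tsub_add
      _ = ∫⁻ x, (1 - f x) ∂μ + ∫⁻ x, f x ∂μ :=
          lintegral_add_left (measurable_const.sub hf) _
  have hπtuniv : πt Set.univ = ∫⁻ z, h z ∂π := by
    rw [hπt_def, withDensity_apply _ MeasurableSet.univ, setLIntegral_univ]
  have hfst_bound : ∫⁻ z, (1 - trunc (f z.1)) ∂π ≤ ∫⁻ x, (f x - 1) ∂μ := by
    have e1 : ∫⁻ z, (1 - trunc (f z.1)) ∂π
        = ∫⁻ x, (1 - trunc (f x)) ∂(π.map Prod.fst) :=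
      (lintegral_map (measurable_const.sub htf) measurable_fst).symm
    rw [e1, ← Measure.withDensity_rnDeriv_eq _ _ h1,
      lintegral_withDensity_eq_lintegral_mul _ hf (show Measurable fun x => 1 - trunc (f x) from measurable_const.sub htf)]
    apply lintegral_mono_ae
    filter_upwards [Measure.rnDeriv_lt_top (π.map Prod.fst) μ] with x hx
    exact mul_one_sub_trunc_le (f x) hx.ne
  have hsnd_bound : ∫⁻ z, (1 - trunc (g z.2)) ∂π ≤ ∫⁻ y, (g y - 1) ∂ν := by
    have e1 : ∫⁻ z, (1 - trunc (g z.2)) ∂π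
        = ∫⁻ y, (1 - trunc (g y)) ∂(π.map Prod.snd) :=
      (lintegral_map (measurable_const.sub htg) measurable_snd).symm
    rw [e1, ← Measure.withDensity_rnDeriv_eq _ _ h2,
      lintegral_withDensity_eq_lintegral_mul _ hg (show Measurable fun y => 1 - trunc (g y) from measurable_const.sub htg)]
    apply lintegral_mono_ae
    filter_upwards [Measure.rnDeriv_lt_top (π.map Prod.snd) ν] with y hy
    exact mul_one_sub_trunc_le (g y) hy.ne
  have htwo : π Set.univ - πt Set.univ ≤ ∫⁻ x, (f x - 1) ∂μ + ∫⁻ y, (g y - 1) ∂ν := by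
    rw [tsub_le_iff_right]
    have key : ∫⁻ z, (1 - h z) ∂π ≤ ∫⁻ x, (f x - 1) ∂μ + ∫⁻ y, (g y - 1) ∂ν := by
      calc ∫⁻ z, (1 - h z) ∂π
          ≤ ∫⁻ z, ((1 - trunc (f z.1)) + (1 - trunc (g z.2))) ∂π :=
            lintegral_mono fun z =>
              one_sub_mul_le _ _ (trunc_le_one _) (trunc_le_one _)
        _ = ∫⁻ z, (1 - trunc (f z.1)) ∂π + ∫⁻ z, (1 - trunc (g z.2)) ∂π :=
            lintegral_add_left (measurable_const.sub (htf.comp measurable_fst)) _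
        _ ≤ _ := add_le_add hfst_bound hsnd_bound
    calc π Set.univ = ∫⁻ _, (1:ℝ≥0∞) ∂π := by simp
      _ ≤ ∫⁻ z, (h z + (1 - h z)) ∂π := lintegral_mono fun z => le_add_tsub
      _ = πt Set.univ + ∫⁻ z, (1 - h z) ∂π := by rw [lintegral_add_left hh, hπtuniv]
      _ ≤ πt Set.univ + (∫⁻ x, (f x - 1) ∂μ + ∫⁻ y, (g y - 1) ∂ν) := add_le_add_right key _
      _ = (∫⁻ x, (f x - 1) ∂μ + ∫⁻ y, (g y - 1) ∂ν) + πt Set.univ := add_comm _ _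
  have hsE : s ≤ ∫⁻ x, (1 - f x) ∂μ + ∫⁻ x, (f x - 1) ∂μ + ∫⁻ y, (g y - 1) ∂ν := by
    have tri : s ≤ (1 - π Set.univ) + (π Set.univ - πt Set.univ) := by
      rw [hs_def, tsub_le_iff_right]
      calc (1:ℝ≥0∞) ≤ (1 - π Set.univ) + π Set.univ := le_tsub_add
        _ ≤ (1 - π Set.univ) + ((π Set.univ - πt Set.univ) + πt Set.univ) :=
            add_le_add_right le_tsub_add _
        _ = (1 - π Set.univ) + (π Set.univ - πt Set.univ) + πt Set.univ :=
            (add_assoc _ _ _).symm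
    calc s ≤ (1 - π Set.univ) + (π Set.univ - πt Set.univ) := tri
      _ ≤ ∫⁻ x, (1 - f x) ∂μ + (∫⁻ x, (f x - 1) ∂μ + ∫⁻ y, (g y - 1) ∂ν) :=
          add_le_add hone htwo
      _ = _ := (add_assoc _ _ _).symm
  refine ⟨π', hmargs1, hmargs2, ?_⟩
  calc ∫⁻ z, C z ∂π'
      = ∫⁻ z, C z ∂πt + s⁻¹ * ∫⁻ z, C z ∂(r₁.prod r₂) := by
        rw [hπ'_def, lintegral_add_measure, lintegral_smul_measure, smul_eq_mul]
    _ ≤ ∫⁻ z, C z ∂π + K * s := add_le_add hcost_t hsmulcost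
    _ ≤ _ := add_le_add_right (mul_le_mul_right hsE _) _

end Surgery2

section Helpers
variable {Z : Type*} [MeasurableSpace Z]

/-- Csiszár divergence of a measure with itself vanishes. -/
lemma csiszar_self_eq_zero' {Ψ : ℝ → ℝ≥0∞} (hone : Ψ 1 = 0) (μ : Measure Z)
    [SigmaFinite μ] : (if μ ≪ μ then ∫⁻ z, Ψ ((μ.rnDeriv μ z).toReal) ∂μ else ∞) = 0 := by
  rw [if_pos Measure.AbsolutelyContinuous.rfl]
  have h0 : (fun z => Ψ ((μ.rnDeriv μ z).toReal)) =ᵐ[μ] (fun _ => 0) := by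
    filter_upwards [Measure.rnDeriv_self μ] with z hz
    rw [hz]
    simpa using hone
  rw [lintegral_congr_ae h0, lintegral_zero]

/-- A lintegral bound via a bound on a carrier set of full measure. -/
lemma lintegral_le_of_null_compl (C : Z → ℝ≥0∞) (S : Set Z) (hS : MeasurableSet S)
    (K : ℝ≥0∞) (hK : ∀ z ∈ S, C z ≤ K) (m : Measure Z) (hm : m Sᶜ = 0) :
    ∫⁻ z, C z ∂m ≤ K * m Set.univ := by
  calc ∫⁻ z, C z ∂m = ∫⁻ z in S, C z ∂m + ∫⁻ z in Sᶜ, C z ∂m :=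
        (lintegral_add_compl _ hS).symm
    _ = ∫⁻ z in S, C z ∂m := by rw [setLIntegral_measure_zero _ _ hm, add_zero]
    _ ≤ ∫⁻ _ in S, K ∂m := setLIntegral_mono measurable_const hK
    _ = K * m S := setLIntegral_const _ _
    _ ≤ K * m Set.univ := mul_le_mul_right (measure_mono (Set.subset_univ _)) _

end Helpers



/-- Csiszár divergence of a measure with itself is zero. -/
lemma csiszar_self {Z : Type*} [MeasurableSpace Z] {Ψ : ℝ → ℝ≥0∞} (hone : Ψ 1 = 0)
    (μ : Measure Z) [SigmaFinite μ] : csiszar Ψ μ μ = 0 := by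
  unfold csiszar
  exact csiszar_self_eq_zero' hone μ

/-- If both marginals vanish outside `X`, `Y` respectively, the coupling vanishes
outside `X ×ˢ Y`. -/
lemma compl_null_of_marginals {A B : Type*} [MeasurableSpace A] [MeasurableSpace B]
    (π : Measure (A × B)) {X : Set A} {Y : Set B}
    (hXm : MeasurableSet X) (hYm : MeasurableSet Y)
    (h1 : (π.map Prod.fst) Xᶜ = 0) (h2 : (π.map Prod.snd) Yᶜ = 0) :
    π ((X ×ˢ Y)ᶜ) = 0 := by
  have hsub : ((X ×ˢ Y)ᶜ : Set (A × B)) ⊆ (Prod.fst ⁻¹' Xᶜ) ∪ (Prod.snd ⁻¹' Yᶜ) := by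
    intro z hz
    rw [Set.mem_compl_iff, Set.mem_prod, not_and_or] at hz
    rcases hz with hz | hz
    · exact Or.inl hz
    · exact Or.inr hz
  refine measure_mono_null hsub (measure_union_null ?_ ?_)
  · rw [← Measure.map_apply measurable_fst hXm.compl]; exact h1
  · rw [← Measure.map_apply measurable_snd hYm.compl]; exact h2

/-- If `Ψ₁, Ψ₂` are strictly convex and finite on `(0,∞)`, then
`C_ub^α(μ,ν) → C(μ,ν)` as `α → ∞`. -/
theorem uotcost_tendsto_otcost
    {d : ℕ} (τ : ℝ) (hτ : 0 < τ)
    (X Y : Set (EuclideanSpace ℝ (Fin d))) (hX : IsCompact X) (hY : IsCompact Y)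
    (μ ν : Measure (EuclideanSpace ℝ (Fin d)))
    [IsProbabilityMeasure μ] [IsProbabilityMeasure ν]
    (hμX : μ Xᶜ = 0) (hνY : ν Yᶜ = 0)
    (Ψ₁ Ψ₂ : ℝ → ℝ≥0∞) (hΨ₁ : IsEntropy Ψ₁) (hΨ₂ : IsEntropy Ψ₂)
    (hΨ₁sc : StrictlyConvexOnPos Ψ₁) (hΨ₂sc : StrictlyConvexOnPos Ψ₂)
    (hΨ₁fin : ∀ x : ℝ, 0 < x → Ψ₁ x ≠ ∞) (hΨ₂fin : ∀ x : ℝ, 0 < x → Ψ₂ x ≠ ∞) :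
    Tendsto (fun α : ℝ => UOTcost τ α Ψ₁ Ψ₂ X Y μ ν) atTop (𝓝 (OTcost τ μ ν)) := by
  have hXm : MeasurableSet X := hX.isClosed.measurableSet
  have hYm : MeasurableSet Y := hY.isClosed.measurableSet
  -- measurability and boundedness of the cost
  have hcostcont : Continuous (fun z : EuclideanSpace ℝ (Fin d) × EuclideanSpace ℝ (Fin d) =>
      cost τ z.1 z.2) := by
    simp only [cost]
    exact continuous_const.mul ((continuous_fst.sub continuous_snd).norm.pow 2)
  have hcostmeas : Measurable (fun z : EuclideanSpace ℝ (Fin d) × EuclideanSpace ℝ (Fin d) =>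
      ENNReal.ofReal (cost τ z.1 z.2)) :=
    ENNReal.measurable_ofReal.comp hcostcont.measurable
  obtain ⟨C0, hC0⟩ := (hX.prod hY).exists_bound_of_continuousOn hcostcont.continuousOn
  set Cr : ℝ := max C0 0 with hCr_def
  have hCr0 : (0:ℝ) ≤ Cr := le_max_right _ _
  set K : ℝ≥0∞ := ENNReal.ofReal Cr with hK_def
  have hKne : K ≠ ∞ := ENNReal.ofReal_ne_top
  have hK : ∀ z : EuclideanSpace ℝ (Fin d) × EuclideanSpace ℝ (Fin d),
      z.1 ∈ X → z.2 ∈ Y → ENNReal.ofReal (cost τ z.1 z.2) ≤ K := by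
    intro z h1 h2
    apply ENNReal.ofReal_le_ofReal
    calc cost τ z.1 z.2 ≤ ‖cost τ z.1 z.2‖ := le_abs_self _
      _ ≤ C0 := hC0 z ⟨h1, h2⟩
      _ ≤ Cr := le_max_left _ _
  -- the optimal transport cost is bounded by K
  have hOTle : OTcost τ μ ν ≤ K := by
    have hnull : (μ.prod ν) ((X ×ˢ Y)ᶜ) = 0 := by
      refine compl_null_of_marginals _ hXm hYm ?_ ?_
      · rw [Measure.map_fst_prod, measure_univ, one_smul]; exact hμX
      · rw [Measure.map_snd_prod, measure_univ, one_smul]; exact hνY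
    calc OTcost τ μ ν
        ≤ ∫⁻ z, ENNReal.ofReal (cost τ z.1 z.2) ∂(μ.prod ν) := by
          refine iInf₂_le (μ.prod ν) ⟨?_, ?_⟩
          · rw [Measure.map_fst_prod, measure_univ, one_smul]
          · rw [Measure.map_snd_prod, measure_univ, one_smul]
      _ ≤ K * (μ.prod ν) Set.univ :=
          lintegral_le_of_null_compl _ (X ×ˢ Y) (hXm.prod hYm) K
            (fun z hz => hK z hz.1 hz.2) _ hnull
      _ = K := by rw [measure_univ, mul_one]
  have hOTne : OTcost τ μ ν ≠ ∞ := (lt_of_le_of_lt hOTle ENNReal.ofReal_lt_top).ne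
  -- the UOT cost is below the OT cost
  have hUOTle : ∀ α : ℝ, UOTcost τ α Ψ₁ Ψ₂ X Y μ ν ≤ OTcost τ μ ν := by
    intro α
    refine le_iInf fun π => le_iInf fun hm => ?_
    haveI : IsFiniteMeasure π := by
      constructor
      have : π Set.univ = (π.map Prod.fst) Set.univ := by
        rw [Measure.map_apply measurable_fst MeasurableSet.univ]; rfl
      rw [this, hm.1, measure_univ]
      exact ENNReal.one_lt_top
    have hnull : π ((X ×ˢ Y)ᶜ) = 0 :=
      compl_null_of_marginals π hXm hYm (by rw [hm.1]; exact hμX) (by rw [hm.2]; exact hνY)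
    calc UOTcost τ α Ψ₁ Ψ₂ X Y μ ν ≤ uotObj τ α Ψ₁ Ψ₂ μ ν π :=
          iInf_le_of_le π (iInf_le_of_le ‹_› (iInf_le_of_le hnull le_rfl))
      _ = ∫⁻ z, ENNReal.ofReal (cost τ z.1 z.2) ∂π := by
          simp only [uotObj, hm.1, hm.2, csiszar_self hΨ₁.one_eq_zero,
            csiszar_self hΨ₂.one_eq_zero, mul_zero, add_zero]
  -- monotonicity in α
  have hmono : Monotone (fun α : ℝ => UOTcost τ α Ψ₁ Ψ₂ X Y μ ν) := by
    intro a b hab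
    refine iInf_mono fun π => iInf_mono fun _ => iInf_mono fun _ => ?_
    unfold uotObj
    gcongr <;> exact ENNReal.ofReal_le_ofReal hab
  -- the key quantitative estimate
  have key : ∀ ε' : ℝ, 0 < ε' → ∃ α : ℝ,
      OTcost τ μ ν ≤ UOTcost τ α Ψ₁ Ψ₂ X Y μ ν + ENNReal.ofReal ε' := by
    intro ε' hε'
    -- choice of δ
    set δ : ℝ := min (1/2) (ε' / (12 * (Cr + 1))) with hδ_def
    have hδ0 : 0 < δ := lt_min (by norm_num) (div_pos hε' (by positivity))
    have hδ1 : δ < 1 := lt_of_le_of_lt (min_le_left _ _) (by norm_num)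
    have hδkey : Cr * (δ + δ + δ) ≤ ε' / 4 := by
      have h1 : δ ≤ ε' / (12 * (Cr + 1)) := min_le_right _ _
      have h3 : 3 * (Cr + 1) * δ ≤ 3 * (Cr + 1) * (ε' / (12 * (Cr + 1))) := by
        apply mul_le_mul_of_nonneg_left h1 (by positivity)
      have h4 : 3 * (Cr + 1) * (ε' / (12 * (Cr + 1))) = ε' / 4 := by
        field_simp
        ring
      nlinarith
    set q : ℝ≥0∞ := ENNReal.ofReal (ε' / 4) with hq_def
    have hq0 : q ≠ 0 := (ENNReal.ofReal_pos.2 (by positivity)).ne'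
    have hqT : q ≠ ∞ := ENNReal.ofReal_ne_top
    -- entropy constants
    have hc11 : Ψ₁ (1 - δ) ≠ 0 := psi_pos hΨ₁ hΨ₁sc (by linarith) (by intro h; linarith)
    have hc21 : Ψ₁ (1 + δ) ≠ 0 := psi_pos hΨ₁ hΨ₁sc (by linarith) (by intro h; linarith)
    have hc22 : Ψ₂ (1 + δ) ≠ 0 := psi_pos hΨ₂ hΨ₂sc (by linarith) (by intro h; linarith)
    set G : ℝ≥0∞ := (Ψ₁ (1 - δ))⁻¹ + ENNReal.ofReal (1 + δ) * (Ψ₁ (1 + δ))⁻¹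
      + ENNReal.ofReal (1 + δ) * (Ψ₂ (1 + δ))⁻¹ with hG_def
    have hGne : G ≠ ∞ := by
      apply ENNReal.add_ne_top.2
      constructor
      · apply ENNReal.add_ne_top.2
        exact ⟨ENNReal.inv_ne_top.2 hc11,
          ENNReal.mul_ne_top ENNReal.ofReal_ne_top (ENNReal.inv_ne_top.2 hc21)⟩
      · exact ENNReal.mul_ne_top ENNReal.ofReal_ne_top (ENNReal.inv_ne_top.2 hc22)
    set Bub : ℝ≥0∞ := K + ENNReal.ofReal ε' with hBub_def
    have hBubne : Bub ≠ ∞ := ENNReal.add_ne_top.2 ⟨hKne, ENNReal.ofReal_ne_top⟩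
    set T : ℝ≥0∞ := K * Bub * G with hT_def
    have hTne : T ≠ ∞ := ENNReal.mul_ne_top (ENNReal.mul_ne_top hKne hBubne) hGne
    -- choice of α
    set α : ℝ := max 1 ((T / q).toReal + 1) with hα_def
    have hα1 : (1:ℝ) ≤ α := le_max_left _ _
    have hα0 : (0:ℝ) < α := lt_of_lt_of_le one_pos hα1
    have hofα0 : ENNReal.ofReal α ≠ 0 := (ENNReal.ofReal_pos.2 hα0).ne'
    have hTq : T / ENNReal.ofReal α ≤ q := by
      have hTqne : T / q ≠ ∞ := (ENNReal.div_lt_top hTne hq0).ne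
      have h5 : T / q ≤ ENNReal.ofReal α := by
        calc T / q = ENNReal.ofReal ((T / q).toReal) := (ENNReal.ofReal_toReal hTqne).symm
          _ ≤ ENNReal.ofReal α := by
              apply ENNReal.ofReal_le_ofReal
              calc (T / q).toReal ≤ (T / q).toReal + 1 := by linarith
                _ ≤ α := le_max_right _ _
      rw [ENNReal.div_le_iff_le_mul (Or.inl hofα0) (Or.inl ENNReal.ofReal_ne_top)]
      calc T = T / q * q := (ENNReal.div_mul_cancel hq0 hqT).symm
        _ ≤ ENNReal.ofReal α * q := mul_le_mul_left h5 _
        _ = q * ENNReal.ofReal α := mul_comm _ _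
    refine ⟨α, ?_⟩
    -- pick a near-optimal feasible π
    have hUOTne : UOTcost τ α Ψ₁ Ψ₂ X Y μ ν ≠ ∞ :=
      (lt_of_le_of_lt (le_trans (hUOTle α) hOTle) ENNReal.ofReal_lt_top).ne
    have hlt : UOTcost τ α Ψ₁ Ψ₂ X Y μ ν < UOTcost τ α Ψ₁ Ψ₂ X Y μ ν + q :=
      ENNReal.lt_add_right hUOTne hq0
    obtain ⟨π, hπlt⟩ : ∃ π : Measure (EuclideanSpace ℝ (Fin d) × EuclideanSpace ℝ (Fin d)),
        (⨅ (_ : IsFiniteMeasure π) (_ : π ((X ×ˢ Y)ᶜ) = 0), uotObj τ α Ψ₁ Ψ₂ μ ν π)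
          < UOTcost τ α Ψ₁ Ψ₂ X Y μ ν + q := by
      rw [← iInf_lt_iff]
      exact hlt
    obtain ⟨hπfin, hπlt⟩ : ∃ _ : IsFiniteMeasure π,
        (⨅ (_ : π ((X ×ˢ Y)ᶜ) = 0), uotObj τ α Ψ₁ Ψ₂ μ ν π)
          < UOTcost τ α Ψ₁ Ψ₂ X Y μ ν + q := by
      rw [← iInf_lt_iff]
      exact hπlt
    obtain ⟨hπnull, hπobj⟩ : ∃ _ : π ((X ×ˢ Y)ᶜ) = 0,
        uotObj τ α Ψ₁ Ψ₂ μ ν π < UOTcost τ α Ψ₁ Ψ₂ X Y μ ν + q := by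
      rw [← iInf_lt_iff]
      exact hπlt
    haveI := hπfin
    set B2 : ℝ≥0∞ := UOTcost τ α Ψ₁ Ψ₂ X Y μ ν + q with hB2_def
    have hB2le : B2 ≤ Bub := by
      rw [hB2_def, hBub_def]
      exact add_le_add (le_trans (hUOTle α) hOTle)
        (ENNReal.ofReal_le_ofReal (by linarith))
    have hB2ne : B2 ≠ ∞ := (lt_of_le_of_lt hB2le hBubne.lt_top).ne
    have hobj : ∫⁻ z, ENNReal.ofReal (cost τ z.1 z.2) ∂π
        + ENNReal.ofReal α * csiszar Ψ₁ (π.map Prod.fst) μ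
        + ENNReal.ofReal α * csiszar Ψ₂ (π.map Prod.snd) ν ≤ B2 := hπobj.le
    haveI : IsFiniteMeasure (π.map Prod.fst) :=
      ⟨by rw [Measure.map_apply measurable_fst MeasurableSet.univ]; exact measure_lt_top _ _⟩
    haveI : IsFiniteMeasure (π.map Prod.snd) :=
      ⟨by rw [Measure.map_apply measurable_snd MeasurableSet.univ]; exact measure_lt_top _ _⟩
    have hcostπ : ∫⁻ z, ENNReal.ofReal (cost τ z.1 z.2) ∂π ≤ B2 :=
      le_trans (le_add_right (le_add_right le_rfl)) hobj
    -- absolute continuity of the marginals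
    have hAC1 : π.map Prod.fst ≪ μ := by
      by_contra hac
      rw [show csiszar Ψ₁ (π.map Prod.fst) μ = ∞ from by rw [csiszar, if_neg hac],
        ENNReal.mul_top hofα0, add_top, top_add] at hobj
      exact hB2ne (top_le_iff.1 hobj)
    have hAC2 : π.map Prod.snd ≪ ν := by
      by_contra hac
      rw [show csiszar Ψ₂ (π.map Prod.snd) ν = ∞ from by rw [csiszar, if_neg hac],
        ENNReal.mul_top hofα0, add_top] at hobj
      exact hB2ne (top_le_iff.1 hobj)
    set Db : ℝ≥0∞ := B2 / ENNReal.ofReal α with hDb_def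
    have hD1le : ∫⁻ x, Ψ₁ (((π.map Prod.fst).rnDeriv μ x).toReal) ∂μ ≤ Db := by
      have h6 : csiszar Ψ₁ (π.map Prod.fst) μ ≤ Db := by
        rw [hDb_def, ENNReal.le_div_iff_mul_le (Or.inl hofα0) (Or.inl ENNReal.ofReal_ne_top),
          mul_comm]
        exact le_trans (le_add_right le_add_self) hobj
      rwa [csiszar, if_pos hAC1] at h6
    have hD2le : ∫⁻ y, Ψ₂ (((π.map Prod.snd).rnDeriv ν y).toReal) ∂ν ≤ Db := by
      have h6 : csiszar Ψ₂ (π.map Prod.snd) ν ≤ Db := by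
        rw [hDb_def, ENNReal.le_div_iff_mul_le (Or.inl hofα0) (Or.inl ENNReal.ofReal_ne_top),
          mul_comm]
        exact le_trans le_add_self hobj
      rwa [csiszar, if_pos hAC2] at h6
    -- apply the divergence bounds
    have hb1 := div_bound_lower hΨ₁ hΨ₁sc hΨ₁fin hδ0 hδ1 (π.map Prod.fst) μ
    have hb2 := div_bound_upper hΨ₁ hΨ₁sc hΨ₁fin hδ0 (π.map Prod.fst) μ
    have hb3 := div_bound_upper hΨ₂ hΨ₂sc hΨ₂fin hδ0 (π.map Prod.snd) ν
    -- apply surgery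
    obtain ⟨π', hm1, hm2, hcost⟩ := surgery
      (fun z => ENNReal.ofReal (cost τ z.1 z.2)) hcostmeas X Y hXm hYm K hK
      μ ν hμX hνY π hAC1 hAC2
    have hOTπ' : OTcost τ μ ν ≤ ∫⁻ z, ENNReal.ofReal (cost τ z.1 z.2) ∂π' :=
      iInf₂_le π' ⟨hm1, hm2⟩
    -- the total marginal defect bound
    have hEb : (∫⁻ x, (1 - (π.map Prod.fst).rnDeriv μ x) ∂μ)
        + (∫⁻ x, ((π.map Prod.fst).rnDeriv μ x - 1) ∂μ)
        + (∫⁻ y, ((π.map Prod.snd).rnDeriv ν y - 1) ∂ν)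
        ≤ (ENNReal.ofReal δ + ENNReal.ofReal δ + ENNReal.ofReal δ) + Db * G := by
      calc (∫⁻ x, (1 - (π.map Prod.fst).rnDeriv μ x) ∂μ)
          + (∫⁻ x, ((π.map Prod.fst).rnDeriv μ x - 1) ∂μ)
          + (∫⁻ y, ((π.map Prod.snd).rnDeriv ν y - 1) ∂ν)
          ≤ (ENNReal.ofReal δ
              + (∫⁻ x, Ψ₁ (((π.map Prod.fst).rnDeriv μ x).toReal) ∂μ) * (Ψ₁ (1 - δ))⁻¹)
            + (ENNReal.ofReal δ
              + (∫⁻ x, Ψ₁ (((π.map Prod.fst).rnDeriv μ x).toReal) ∂μ)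
                * (ENNReal.ofReal (1 + δ) * (Ψ₁ (1 + δ))⁻¹))
            + (ENNReal.ofReal δ
              + (∫⁻ y, Ψ₂ (((π.map Prod.snd).rnDeriv ν y).toReal) ∂ν)
                * (ENNReal.ofReal (1 + δ) * (Ψ₂ (1 + δ))⁻¹)) :=
            add_le_add (add_le_add hb1 hb2) hb3
        _ ≤ (ENNReal.ofReal δ + Db * (Ψ₁ (1 - δ))⁻¹)
            + (ENNReal.ofReal δ + Db * (ENNReal.ofReal (1 + δ) * (Ψ₁ (1 + δ))⁻¹))
            + (ENNReal.ofReal δ + Db * (ENNReal.ofReal (1 + δ) * (Ψ₂ (1 + δ))⁻¹)) := by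
            gcongr
        _ = (ENNReal.ofReal δ + ENNReal.ofReal δ + ENNReal.ofReal δ) + Db * G := by
            rw [hG_def]
            ring
    -- piece 1: the δ-term
    have hpiece1 : K * (ENNReal.ofReal δ + ENNReal.ofReal δ + ENNReal.ofReal δ) ≤ q := by
      rw [hK_def, hq_def, ← ENNReal.ofReal_add hδ0.le hδ0.le,
        ← ENNReal.ofReal_add (by linarith) hδ0.le, ← ENNReal.ofReal_mul hCr0]
      exact ENNReal.ofReal_le_ofReal hδkey
    -- piece 2: the divergence term
    have hpiece2 : K * (Db * G) ≤ q := by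
      calc K * (Db * G) ≤ K * ((Bub / ENNReal.ofReal α) * G) := by
            gcongr
            exact ENNReal.div_le_div_right hB2le _
        _ = T / ENNReal.ofReal α := by
            rw [hT_def, div_eq_mul_inv, div_eq_mul_inv]
            ring
        _ ≤ q := hTq
    -- conclusion
    have hqsum : q + (q + q) ≤ ENNReal.ofReal ε' := by
      rw [hq_def, ← ENNReal.ofReal_add (by positivity) (by positivity),
        ← ENNReal.ofReal_add (by positivity) (by positivity)]
      exact ENNReal.ofReal_le_ofReal (by linarith)
    calc OTcost τ μ ν ≤ ∫⁻ z, ENNReal.ofReal (cost τ z.1 z.2) ∂π' := hOTπ'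
      _ ≤ ∫⁻ z, ENNReal.ofReal (cost τ z.1 z.2) ∂π
          + K * ((ENNReal.ofReal δ + ENNReal.ofReal δ + ENNReal.ofReal δ) + Db * G) :=
          le_trans hcost (add_le_add_right (mul_le_mul_right hEb K) _)
      _ = ∫⁻ z, ENNReal.ofReal (cost τ z.1 z.2) ∂π
          + (K * (ENNReal.ofReal δ + ENNReal.ofReal δ + ENNReal.ofReal δ) + K * (Db * G)) := by
          ring
      _ ≤ B2 + (q + q) := add_le_add hcostπ (add_le_add hpiece1 hpiece2)
      _ = UOTcost τ α Ψ₁ Ψ₂ X Y μ ν + (q + (q + q)) := by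
          rw [hB2_def]
          ring
      _ ≤ UOTcost τ α Ψ₁ Ψ₂ X Y μ ν + ENNReal.ofReal ε' := add_le_add_right hqsum _
  -- assemble the limit
  have hsup : (⨆ α : ℝ, UOTcost τ α Ψ₁ Ψ₂ X Y μ ν) = OTcost τ μ ν := by
    apply le_antisymm (iSup_le hUOTle)
    apply ENNReal.le_of_forall_pos_le_add
    intro ε hε _
    obtain ⟨α, hα⟩ := key ε (by exact_mod_cast hε)
    calc OTcost τ μ ν ≤ UOTcost τ α Ψ₁ Ψ₂ X Y μ ν + ENNReal.ofReal (ε:ℝ) := hα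
      _ ≤ (⨆ α : ℝ, UOTcost τ α Ψ₁ Ψ₂ X Y μ ν) + ↑ε := by
          rw [ENNReal.ofReal_coe_nnreal]
          exact add_le_add_left (le_iSup (fun α : ℝ => UOTcost τ α Ψ₁ Ψ₂ X Y μ ν) α) _
  have hfinal := tendsto_atTop_iSup hmono
  rwa [hsup] at hfinal

end
end
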